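/- arXiv:1705.02958 — 4 statements merged into one kernel-verified Lean document; each statement's English description precedes it below -/
import Mathlib

section
/- The supertrace str(a) = a(0) on the Weyl algebra satisfies str(a * b) = (−1)^{|a||b|} str(b * a), where |a| denotes the parity of a in the Z_2-grading by even/odd polynomials and * is the Moyal product. -/
open MvPolynomial

variable (n : ℕ)

/-- The single-contraction bidifferential operator `Σ π^{jk} ∂_{y^j} ⊗ ∂_{y^k}`,
acting on polynomials in a doubled set of variables: the left factor lives in the
`Sum.inl` copy, the right factor in the `Sum.inr` copy. -/
noncomputable def moyalStep (π : Matrix (Fin (2 * n)) (Fin (2 * n)) ℂ) :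
    Module.End ℂ (MvPolynomial (Fin (2 * n) ⊕ Fin (2 * n)) ℂ) :=
  ∑ j : Fin (2 * n), ∑ k : Fin (2 * n),
    π j k • ((pderiv (Sum.inl j)).toLinearMap ∘ₗ (pderiv (Sum.inr k)).toLinearMap)

/-- The Moyal star product `a ∗ b = a · exp(i ∂_{y^j}^← π^{jk} ∂_{y^k}^→) · b`
on the polynomial Weyl algebra `A_n = ℂ[y^1,…,y^{2n}]`.  Since `a` is a
polynomial, the exponential series truncates at `totalDegree a`. -/
noncomputable def moyal (π : Matrix (Fin (2 * n)) (Fin (2 * n)) ℂ)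
    (a b : MvPolynomial (Fin (2 * n)) ℂ) : MvPolynomial (Fin (2 * n)) ℂ :=
  ∑ m ∈ Finset.range (a.totalDegree + 1),
    ((Complex.I ^ m) / (m.factorial : ℂ)) •
      (rename (Sum.elim id id))
        (((moyalStep n π) ^ m) (rename Sum.inl a * rename Sum.inr b))

/-- The parity automorphism `a(y) ↦ a(-y)`. -/
noncomputable def parityMap :
    MvPolynomial (Fin (2 * n)) ℂ →ₐ[ℂ] MvPolynomial (Fin (2 * n)) ℂ :=
  aeval fun j => -(X j)

/-! ### Auxiliary lemmas -/

section DegreeLemmas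

variable {τ : Type*}

lemma aux_totalDegree_pderiv_le (j : τ) (p : MvPolynomial τ ℂ) (d : ℕ)
    (h : p.totalDegree ≤ d + 1) : (pderiv j p).totalDegree ≤ d := by
  classical
  conv_lhs => rw [p.as_sum]
  rw [map_sum]
  refine totalDegree_finsetSum_le fun v hv => ?_
  rw [pderiv_monomial]
  by_cases hvj : v j = 0
  · simp [hvj]
  · refine (totalDegree_monomial_le _ _).trans ?_
    have hle : Finsupp.single j 1 ≤ v := Finsupp.single_le_iff.mpr (by omega)
    have hcancel : (v - Finsupp.single j 1) + Finsupp.single j 1 = v :=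
      tsub_add_cancel_of_le hle
    have hsum : ((v - Finsupp.single j 1).sum fun _ e => e) + 1 = v.sum fun _ e => e := by
      conv_rhs => rw [← hcancel]
      rw [Finsupp.sum_add_index' (fun _ => rfl) (fun _ _ _ => rfl),
        Finsupp.sum_single_index rfl]
    have hv' : (v.sum fun _ e => e) ≤ d + 1 := (le_totalDegree hv).trans h
    show ((v - Finsupp.single j 1).sum fun _ e => e) ≤ d
    omega

lemma aux_totalDegree_pderiv_lt (j : τ) (p : MvPolynomial τ ℂ)
    (h : pderiv j p ≠ 0) : (pderiv j p).totalDegree < p.totalDegree := by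
  rcases Nat.eq_zero_or_pos p.totalDegree with h0 | hpos
  · exfalso
    apply h
    rw [p.as_sum, map_sum]
    refine Finset.sum_eq_zero fun v hv => ?_
    rw [pderiv_monomial, (totalDegree_eq_zero_iff τ p).mp h0 v hv j]
    simp
  · have := aux_totalDegree_pderiv_le j p (p.totalDegree - 1) (by omega)
    omega

lemma aux_pderiv_pderiv (i j : τ) (p : MvPolynomial τ ℂ) :
    pderiv i (pderiv j p) = pderiv j (pderiv i p) := by
  classical
  rcases eq_or_ne i j with rfl | hij
  · rfl
  · conv_lhs => rw [p.as_sum]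
    conv_rhs => rw [p.as_sum]
    rw [map_sum, map_sum, map_sum, map_sum]
    refine Finset.sum_congr rfl fun v hv => ?_
    rw [pderiv_monomial, pderiv_monomial, pderiv_monomial, pderiv_monomial, tsub_tsub,
      tsub_tsub, add_comm (Finsupp.single j 1)]
    have h1 : ((v - Finsupp.single j 1 : τ →₀ ℕ)) i = v i := by
      simp [Finsupp.sub_apply, Finsupp.single_apply, Ne.symm hij]
    have h2 : ((v - Finsupp.single i 1 : τ →₀ ℕ)) j = v j := by
      simp [Finsupp.sub_apply, Finsupp.single_apply, hij]
    rw [h1, h2, mul_right_comm]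

end DegreeLemmas

section SignSub

variable {τ : Type*}

/-- The substitution `X i ↦ s i • X i`. -/
noncomputable def signSub (s : τ → ℂ) :
    MvPolynomial τ ℂ →ₐ[ℂ] MvPolynomial τ ℂ :=
  aeval fun i => s i • X i

lemma signSub_X (s : τ → ℂ) (i : τ) : signSub s (X i) = s i • X i :=
  aeval_X _ _

lemma pderiv_signSub (s : τ → ℂ) (j : τ) (p : MvPolynomial τ ℂ) :
    pderiv j (signSub s p) = s j • signSub s (pderiv j p) := by
  classical
  induction p using MvPolynomial.induction_on with
  | C a => simp [signSub]
  | add p q hp hq => simp [hp, hq, smul_add]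
  | mul_X p i hp =>
      rw [smul_eq_C_mul] at hp
      rcases eq_or_ne i j with rfl | hij
      · simp only [map_mul, signSub_X, smul_eq_C_mul, pderiv_mul, pderiv_C, pderiv_X_self,
          map_add, map_one, hp, mul_one, mul_zero, add_zero, zero_mul, zero_add]
        ring
      · simp only [map_mul, signSub_X, smul_eq_C_mul, pderiv_mul, pderiv_C,
          pderiv_X_of_ne hij, map_add, map_zero, hp, mul_one, mul_zero, add_zero,
          zero_mul, zero_add]
        ring

lemma constantCoeff_signSub (s : τ → ℂ) (p : MvPolynomial τ ℂ) :
    constantCoeff (signSub s p) = constantCoeff p := by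
  induction p using MvPolynomial.induction_on with
  | C a => simp [signSub]
  | add p q hp hq => simp [hp, hq]
  | mul_X p i hp => simp [signSub_X, map_mul, constantCoeff_smul, constantCoeff_X]

end SignSub

section MoyalStepLemmas

variable (π : Matrix (Fin (2 * n)) (Fin (2 * n)) ℂ)

lemma moyalStep_apply (q : MvPolynomial (Fin (2 * n) ⊕ Fin (2 * n)) ℂ) :
    moyalStep n π q =
      ∑ j : Fin (2 * n), ∑ k : Fin (2 * n),
        π j k • pderiv (Sum.inl j) (pderiv (Sum.inr k) q) := by
  rw [moyalStep, LinearMap.sum_apply]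
  refine Finset.sum_congr rfl fun j _ => ?_
  rw [LinearMap.sum_apply]
  refine Finset.sum_congr rfl fun k _ => ?_
  rfl

lemma aux_pderiv_inr_rename_inl (k : Fin (2 * n)) (a : MvPolynomial (Fin (2 * n)) ℂ) :
    pderiv (Sum.inr k) (rename (Sum.inl : Fin (2 * n) → Fin (2 * n) ⊕ Fin (2 * n)) a) = 0 := by
  apply pderiv_eq_zero_of_notMem_vars
  intro hmem
  obtain ⟨x, -, hx⟩ := mem_vars_rename _ _ hmem
  exact Sum.inl_ne_inr hx

lemma aux_pderiv_inl_rename_inr (j : Fin (2 * n)) (b : MvPolynomial (Fin (2 * n)) ℂ) :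
    pderiv (Sum.inl j) (rename (Sum.inr : Fin (2 * n) → Fin (2 * n) ⊕ Fin (2 * n)) b) = 0 := by
  apply pderiv_eq_zero_of_notMem_vars
  intro hmem
  obtain ⟨x, -, hx⟩ := mem_vars_rename _ _ hmem
  exact Sum.inr_ne_inl hx

lemma moyalStep_apply_mul (a b : MvPolynomial (Fin (2 * n)) ℂ) :
    moyalStep n π (rename Sum.inl a * rename Sum.inr b) =
      ∑ j : Fin (2 * n), ∑ k : Fin (2 * n),
        π j k • (rename Sum.inl (pderiv j a) * rename Sum.inr (pderiv k b)) := by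
  rw [moyalStep_apply]
  refine Finset.sum_congr rfl fun j _ => Finset.sum_congr rfl fun k _ => ?_
  congr 1
  rw [pderiv_mul, aux_pderiv_inr_rename_inl, zero_mul, zero_add,
    pderiv_rename Sum.inr_injective, pderiv_mul, pderiv_rename Sum.inl_injective,
    aux_pderiv_inl_rename_inr, mul_zero, add_zero]

lemma moyalStep_swap (hanti : π.transpose = -π)
    (q : MvPolynomial (Fin (2 * n) ⊕ Fin (2 * n)) ℂ) :
    moyalStep n π (rename Sum.swap q) = - rename Sum.swap (moyalStep n π q) := by
  have hswap : Function.Injective (Sum.swap : Fin (2 * n) ⊕ Fin (2 * n) → _) :=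
    Function.LeftInverse.injective Sum.swap_leftInverse
  have e1 : ∀ (k : Fin (2 * n)) (r : MvPolynomial (Fin (2 * n) ⊕ Fin (2 * n)) ℂ),
      pderiv (Sum.inr k) (rename Sum.swap r) = rename Sum.swap (pderiv (Sum.inl k) r) := by
    intro k r
    have h := pderiv_rename (R := ℂ) hswap (Sum.inl k) r
    simpa using h
  have e2 : ∀ (j : Fin (2 * n)) (r : MvPolynomial (Fin (2 * n) ⊕ Fin (2 * n)) ℂ),
      pderiv (Sum.inl j) (rename Sum.swap r) = rename Sum.swap (pderiv (Sum.inr j) r) := by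
    intro j r
    have h := pderiv_rename (R := ℂ) hswap (Sum.inr j) r
    simpa using h
  rw [moyalStep_apply, moyalStep_apply]
  have step1 : ∀ j k : Fin (2 * n),
      π j k • pderiv (Sum.inl j) (pderiv (Sum.inr k) (rename Sum.swap q))
        = π j k • rename Sum.swap (pderiv (Sum.inr j) (pderiv (Sum.inl k) q)) := by
    intro j k
    rw [e1, e2]
  calc
    (∑ j : Fin (2 * n), ∑ k : Fin (2 * n),
        π j k • pderiv (Sum.inl j) (pderiv (Sum.inr k) (rename Sum.swap q)))
      = ∑ j : Fin (2 * n), ∑ k : Fin (2 * n),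
          π j k • rename Sum.swap (pderiv (Sum.inr j) (pderiv (Sum.inl k) q)) := by
        exact Finset.sum_congr rfl fun j _ => Finset.sum_congr rfl fun k _ => step1 j k
    _ = rename Sum.swap (∑ j : Fin (2 * n), ∑ k : Fin (2 * n),
          π j k • pderiv (Sum.inr j) (pderiv (Sum.inl k) q)) := by
        rw [map_sum]
        refine Finset.sum_congr rfl fun j _ => ?_
        rw [map_sum]
        exact Finset.sum_congr rfl fun k _ => (map_smul _ _ _).symm
    _ = rename Sum.swap (- ∑ j : Fin (2 * n), ∑ k : Fin (2 * n),
          π j k • pderiv (Sum.inl j) (pderiv (Sum.inr k) q)) := by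
        congr 1
        rw [Finset.sum_comm, ← Finset.sum_neg_distrib]
        refine Finset.sum_congr rfl fun x _ => ?_
        rw [← Finset.sum_neg_distrib]
        refine Finset.sum_congr rfl fun y _ => ?_
        have hπ : π y x = - π x y := by
          have h := congrFun (congrFun hanti x) y
          simpa [Matrix.transpose_apply, Matrix.neg_apply] using h
        rw [aux_pderiv_pderiv, hπ, neg_smul]
    _ = - rename Sum.swap (∑ j : Fin (2 * n), ∑ k : Fin (2 * n),
          π j k • pderiv (Sum.inl j) (pderiv (Sum.inr k) q)) := by rw [map_neg]

lemma moyalStep_signSub (π : Matrix (Fin (2 * n)) (Fin (2 * n)) ℂ)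
    (s : Fin (2 * n) ⊕ Fin (2 * n) → ℂ)
    (hs : ∀ j k : Fin (2 * n), s (Sum.inl j) * s (Sum.inr k) = -1)
    (q : MvPolynomial (Fin (2 * n) ⊕ Fin (2 * n)) ℂ) :
    moyalStep n π (signSub s q) = - signSub s (moyalStep n π q) := by
  rw [moyalStep_apply, moyalStep_apply, map_sum, ← Finset.sum_neg_distrib]
  refine Finset.sum_congr rfl fun j _ => ?_
  rw [map_sum, ← Finset.sum_neg_distrib]
  refine Finset.sum_congr rfl fun k _ => ?_
  rw [pderiv_signSub, Derivation.map_smul, pderiv_signSub, smul_smul, smul_smul]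
  rw [show π j k * s (Sum.inr k) * s (Sum.inl j) = -π j k by
    rw [mul_assoc, mul_comm (s (Sum.inr k)) (s (Sum.inl j)), hs j k]; ring]
  rw [neg_smul, map_smul]

/-- Anticommutation of a linear map with `moyalStep` propagates to powers. -/
lemma moyalStep_pow_anticomm (π : Matrix (Fin (2 * n)) (Fin (2 * n)) ℂ)
    (F : MvPolynomial (Fin (2 * n) ⊕ Fin (2 * n)) ℂ →ₐ[ℂ]
      MvPolynomial (Fin (2 * n) ⊕ Fin (2 * n)) ℂ)
    (hF : ∀ q, moyalStep n π (F q) = - F (moyalStep n π q)) (m : ℕ)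
    (q : MvPolynomial (Fin (2 * n) ⊕ Fin (2 * n)) ℂ) :
    (moyalStep n π ^ m) (F q) = ((-1 : ℂ) ^ m) • F ((moyalStep n π ^ m) q) := by
  induction m generalizing q with
  | zero => simp
  | succ m ih =>
      rw [pow_succ, Module.End.mul_apply, hF, map_neg, ih, pow_succ, mul_smul,
        neg_one_smul, smul_neg, Module.End.mul_apply]

lemma moyalStep_pow_vanish_left (π : Matrix (Fin (2 * n)) (Fin (2 * n)) ℂ) :
    ∀ (m : ℕ) (a b : MvPolynomial (Fin (2 * n)) ℂ), a.totalDegree < m →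
      (moyalStep n π ^ m) (rename Sum.inl a * rename Sum.inr b) = 0 := by
  intro m
  induction m with
  | zero => exact fun a b h => absurd h (Nat.not_lt_zero _)
  | succ m ih =>
      intro a b h
      rw [pow_succ, Module.End.mul_apply, moyalStep_apply_mul, map_sum]
      refine Finset.sum_eq_zero fun j _ => ?_
      rw [map_sum]
      refine Finset.sum_eq_zero fun k _ => ?_
      rw [map_smul]
      by_cases h0 : pderiv j a = 0
      · rw [h0, map_zero, zero_mul, map_zero, smul_zero]
      · rw [ih _ _ ?_, smul_zero]
        have := aux_totalDegree_pderiv_lt j a h0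
        omega

lemma moyalStep_pow_vanish_right (π : Matrix (Fin (2 * n)) (Fin (2 * n)) ℂ) :
    ∀ (m : ℕ) (a b : MvPolynomial (Fin (2 * n)) ℂ), b.totalDegree < m →
      (moyalStep n π ^ m) (rename Sum.inl a * rename Sum.inr b) = 0 := by
  intro m
  induction m with
  | zero => exact fun a b h => absurd h (Nat.not_lt_zero _)
  | succ m ih =>
      intro a b h
      rw [pow_succ, Module.End.mul_apply, moyalStep_apply_mul, map_sum]
      refine Finset.sum_eq_zero fun j _ => ?_
      rw [map_sum]
      refine Finset.sum_eq_zero fun k _ => ?_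
      rw [map_smul]
      by_cases h0 : pderiv k b = 0
      · rw [h0, map_zero, mul_zero, map_zero, smul_zero]
      · rw [ih _ _ ?_, smul_zero]
        have := aux_totalDegree_pderiv_lt k b h0
        omega

end MoyalStepLemmas

section ParityLemmas

/-- Left parity sign pattern. -/
noncomputable def sigL : Fin (2 * n) ⊕ Fin (2 * n) → ℂ :=
  Sum.elim (fun _ => (-1 : ℂ)) fun _ => (1 : ℂ)

/-- Right parity sign pattern. -/
noncomputable def sigR : Fin (2 * n) ⊕ Fin (2 * n) → ℂ :=
  Sum.elim (fun _ => (1 : ℂ)) fun _ => (-1 : ℂ)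

lemma signSub_sigL_mul (a b : MvPolynomial (Fin (2 * n)) ℂ) :
    signSub (sigL n) (rename Sum.inl a * rename Sum.inr b)
      = rename Sum.inl (parityMap n a) * rename Sum.inr b := by
  have h1 : (signSub (sigL n)).comp (rename (R := ℂ) Sum.inl)
      = (rename Sum.inl).comp (parityMap n) := by
    apply algHom_ext
    intro i
    simp [signSub, sigL, parityMap]
  have h2 : (signSub (sigL n)).comp (rename (R := ℂ) Sum.inr)
      = rename Sum.inr := by
    apply algHom_ext
    intro i
    simp [signSub, sigL]
  rw [map_mul]
  rw [show signSub (sigL n) (rename Sum.inl a) = rename Sum.inl (parityMap n a) from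
    DFunLike.congr_fun h1 a]
  rw [show signSub (sigL n) (rename Sum.inr b) = rename Sum.inr b from
    DFunLike.congr_fun h2 b]

lemma signSub_sigR_mul (a b : MvPolynomial (Fin (2 * n)) ℂ) :
    signSub (sigR n) (rename Sum.inl a * rename Sum.inr b)
      = rename Sum.inl a * rename Sum.inr (parityMap n b) := by
  have h1 : (signSub (sigR n)).comp (rename (R := ℂ) Sum.inl)
      = rename Sum.inl := by
    apply algHom_ext
    intro i
    simp [signSub, sigR]
  have h2 : (signSub (sigR n)).comp (rename (R := ℂ) Sum.inr)
      = (rename Sum.inr).comp (parityMap n) := by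
    apply algHom_ext
    intro i
    simp [signSub, sigR, parityMap]
  rw [map_mul]
  rw [show signSub (sigR n) (rename Sum.inl a) = rename Sum.inl a from
    DFunLike.congr_fun h1 a]
  rw [show signSub (sigR n) (rename Sum.inr b) = rename Sum.inr (parityMap n b) from
    DFunLike.congr_fun h2 b]

end ParityLemmas

/-- the supertrace `str a = a(0)` satisfies
`str(a ∗ b) = (-1)^{|a||b|} str(b ∗ a)` for homogeneous (even/odd) `a, b`. -/
theorem supertrace_supersymmetry (π : Matrix (Fin (2 * n)) (Fin (2 * n)) ℂ)
    (hanti : π.transpose = -π) (hnondeg : IsUnit π.det)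
    (a b : MvPolynomial (Fin (2 * n)) ℂ) (εa εb : Bool)
    (ha : parityMap n a = if εa then -a else a)
    (hb : parityMap n b = if εb then -b else b) :
    constantCoeff (moyal n π a b) =
      (if εa && εb then -1 else 1) * constantCoeff (moyal n π b a) := by
  classical
  -- value of the supertrace as a finite sum of complex numbers
  have hstr : ∀ u v : MvPolynomial (Fin (2 * n)) ℂ,
      constantCoeff (moyal n π u v) = ∑ m ∈ Finset.range (u.totalDegree + 1),
        (Complex.I ^ m / (m.factorial : ℂ)) *
          constantCoeff ((moyalStep n π ^ m) (rename Sum.inl u * rename Sum.inr v)) := by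
    intro u v
    rw [moyal, map_sum]
    refine Finset.sum_congr rfl fun m _ => ?_
    rw [constantCoeff_smul, constantCoeff_rename, smul_eq_mul]
  set N := max a.totalDegree b.totalDegree with hN
  -- extend both sums to a common range
  have hext : ∀ u v : MvPolynomial (Fin (2 * n)) ℂ, u.totalDegree ≤ N →
      (∑ m ∈ Finset.range (u.totalDegree + 1),
        (Complex.I ^ m / (m.factorial : ℂ)) *
          constantCoeff ((moyalStep n π ^ m) (rename Sum.inl u * rename Sum.inr v)))
      = ∑ m ∈ Finset.range (N + 1),
        (Complex.I ^ m / (m.factorial : ℂ)) *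
          constantCoeff ((moyalStep n π ^ m) (rename Sum.inl u * rename Sum.inr v)) := by
    intro u v hu
    refine Finset.sum_subset ?_ ?_
    · intro m hm
      simp only [Finset.mem_range] at *
      omega
    · intro m hm hnot
      simp only [Finset.mem_range] at hm hnot
      rw [moyalStep_pow_vanish_left n π m u v (by omega), map_zero, mul_zero]
  rw [hstr a b, hstr b a, hext a b (le_max_left _ _), hext b a (le_max_right _ _),
    Finset.mul_sum]
  refine Finset.sum_congr rfl fun m _ => ?_
  set x : ℂ := constantCoeff ((moyalStep n π ^ m) (rename Sum.inl a * rename Sum.inr b))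
    with hx
  set y : ℂ := constantCoeff ((moyalStep n π ^ m) (rename Sum.inl b * rename Sum.inr a))
    with hy
  -- swap relation : y = (-1)^m * x
  have hswapprod : rename Sum.swap (rename Sum.inl a * rename Sum.inr b)
      = rename Sum.inl b * rename Sum.inr a := by
    rw [map_mul, rename_rename, rename_rename]
    rw [show (Sum.swap ∘ Sum.inl : Fin (2 * n) → Fin (2 * n) ⊕ Fin (2 * n)) = Sum.inr from rfl,
      show (Sum.swap ∘ Sum.inr : Fin (2 * n) → Fin (2 * n) ⊕ Fin (2 * n)) = Sum.inl from rfl]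
    exact mul_comm _ _
  have hswap : y = (-1 : ℂ) ^ m * x := by
    rw [hy, ← hswapprod,
      moyalStep_pow_anticomm n π (rename Sum.swap)
        (fun q => moyalStep_swap n π hanti q) m,
      constantCoeff_smul, constantCoeff_rename, smul_eq_mul, hx]
  -- parity relation on the left factor
  have hra : (if εa then -x else x) = (-1 : ℂ) ^ m * x := by
    have h1 : constantCoeff ((moyalStep n π ^ m)
        (rename Sum.inl (parityMap n a) * rename Sum.inr b)) = (-1 : ℂ) ^ m * x := by
      rw [← signSub_sigL_mul,
        moyalStep_pow_anticomm n π (signSub (sigL n))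
          (fun q => moyalStep_signSub n π (sigL n) (fun j k => by simp [sigL]) q) m,
        constantCoeff_smul, constantCoeff_signSub, smul_eq_mul, hx]
    rw [← h1, ha]
    cases εa with
    | false => simp [hx]
    | true => simp [map_neg, neg_mul, mul_neg, hx]
  have hrb : (if εb then -x else x) = (-1 : ℂ) ^ m * x := by
    have h1 : constantCoeff ((moyalStep n π ^ m)
        (rename Sum.inl a * rename Sum.inr (parityMap n b))) = (-1 : ℂ) ^ m * x := by
      rw [← signSub_sigR_mul,
        moyalStep_pow_anticomm n π (signSub (sigR n))
          (fun q => moyalStep_signSub n π (sigR n) (fun j k => by simp [sigR]) q) m,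
        constantCoeff_smul, constantCoeff_signSub, smul_eq_mul, hx]
    rw [← h1, hb]
    cases εb with
    | false => simp [hx]
    | true => simp [map_neg, neg_mul, mul_neg, hx]
  rw [hswap]
  cases εa with
  | false =>
      have Ha : x = (-1 : ℂ) ^ m * x := by simpa using hra
      rw [if_neg (by simp)]
      linear_combination (Complex.I ^ m / (m.factorial : ℂ)) * Ha
  | true =>
      cases εb with
      | false =>
          have Hb : x = (-1 : ℂ) ^ m * x := by simpa using hrb
          rw [if_neg (by simp)]
          linear_combination (Complex.I ^ m / (m.factorial : ℂ)) * Hb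
      | true =>
          have Ha : -x = (-1 : ℂ) ^ m * x := by simpa using hra
          rw [show (if (true && true) = true then (-1 : ℂ) else 1) = -1 by norm_num]
          linear_combination -(Complex.I ^ m / (m.factorial : ℂ)) * Ha
end

section
/- The bilinear form B(a,b) = str(a*b) on the Weyl algebra satisfies B(a,b) = B(b̃, a), where b̃(y) = b(−y). -/
open MvPolynomial

variable (n : ℕ)

/-! ### Auxiliary lemmas -/

namespace MoyalAux

theorem pderiv_comm'' {σ : Type*} (i j : σ) (p : MvPolynomial σ ℂ) :
    pderiv i (pderiv j p) = pderiv j (pderiv i p) := by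
  classical
  induction p using MvPolynomial.induction_on' with
  | monomial s a =>
    rcases eq_or_ne i j with rfl | h
    · rfl
    · simp only [pderiv_monomial]
      rw [tsub_right_comm]
      congr 1
      simp only [Finsupp.coe_tsub, Pi.sub_apply, Finsupp.single_apply, if_neg h,
        if_neg (Ne.symm h), Nat.sub_zero]
      ring
  | add p q hp hq => simp [hp, hq]

/-- The variable-scaling algebra homomorphism. -/
noncomputable def Sc {ι : Type*} (c : ι → ℂ) :
    MvPolynomial ι ℂ →ₐ[ℂ] MvPolynomial ι ℂ :=
  aeval fun t => c t • X t

theorem rename_eq_aeval {ι τ : Type*} (f : ι → τ) (p : MvPolynomial ι ℂ) :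
    rename f p = aeval (fun i => (X (f i) : MvPolynomial τ ℂ)) p := by
  rw [← aeval_X_left_apply (rename f p), aeval_rename]
  rfl

theorem pderiv_Sc {ι : Type*} (c : ι → ℂ) (i : ι) (p : MvPolynomial ι ℂ) :
    pderiv i (Sc c p) = c i • Sc c (pderiv i p) := by
  classical
  induction p using MvPolynomial.induction_on with
  | C r => simp [Sc]
  | add p q hp hq => simp [hp, hq, smul_add]
  | mul_X p j hp =>
    rcases eq_or_ne j i with rfl | h
    · simp only [Sc, map_mul, aeval_X, pderiv_mul, pderiv_X_self, pderiv_C, mul_one,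
        map_add, smul_eq_C_mul] at hp ⊢
      rw [hp]
      ring
    · simp only [Sc, map_mul, aeval_X, pderiv_mul, pderiv_X_of_ne h, pderiv_C, mul_zero,
        add_zero, zero_mul, smul_eq_C_mul] at hp ⊢
      rw [hp]
      ring

theorem constantCoeff_Sc {ι : Type*} (c : ι → ℂ) (p : MvPolynomial ι ℂ) :
    constantCoeff (Sc c p) = constantCoeff p := by
  induction p using MvPolynomial.induction_on with
  | C r => simp [Sc]
  | add p q hp hq => simp [hp, hq]
  | mul_X p j hp => simp [Sc, map_mul, constantCoeff_smul]

theorem moyalStep_apply (n : ℕ) (π : Matrix (Fin (2 * n)) (Fin (2 * n)) ℂ)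
    (p : MvPolynomial (Fin (2 * n) ⊕ Fin (2 * n)) ℂ) :
    moyalStep n π p
      = ∑ j : Fin (2 * n), ∑ k : Fin (2 * n),
          π j k • pderiv (Sum.inl j) (pderiv (Sum.inr k) p) := by
  simp [moyalStep, LinearMap.sum_apply, LinearMap.smul_apply]

/-- The scaling with `+1` on the left variables and `-1` on the right variables. -/
noncomputable def cR (n : ℕ) : Fin (2 * n) ⊕ Fin (2 * n) → ℂ :=
  Sum.elim (fun _ => (1 : ℂ)) (fun _ => (-1 : ℂ))

theorem step_Sc (n : ℕ) (π : Matrix (Fin (2 * n)) (Fin (2 * n)) ℂ)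
    (p : MvPolynomial (Fin (2 * n) ⊕ Fin (2 * n)) ℂ) :
    moyalStep n π (Sc (cR n) p) = (-1 : ℂ) • Sc (cR n) (moyalStep n π p) := by
  rw [moyalStep_apply, moyalStep_apply, map_sum, Finset.smul_sum]
  refine Finset.sum_congr rfl fun j _ => ?_
  rw [map_sum, Finset.smul_sum]
  refine Finset.sum_congr rfl fun k _ => ?_
  rw [pderiv_Sc, Derivation.map_smul, pderiv_Sc, map_smul]
  simp only [cR, Sum.elim_inl, Sum.elim_inr, smul_smul]
  congr 1
  ring

/-- Generic conjugation lemma for powers of an endomorphism. -/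
theorem conj_pow {A : Type*} [AddCommGroup A] [Module ℂ A] (f : Module.End ℂ A)
    (g : A →ₗ[ℂ] A) (s : ℂ) (h : ∀ p, f (g p) = s • g (f p)) (m : ℕ) (p : A) :
    (f ^ m) (g p) = s ^ m • g ((f ^ m) p) := by
  induction m generalizing p with
  | zero => simp
  | succ k ih =>
    rw [pow_succ, Module.End.mul_apply, h, map_smul, ih, Module.End.mul_apply, smul_smul,
      pow_succ]
    congr 1
    ring

theorem step_swap (n : ℕ) (π : Matrix (Fin (2 * n)) (Fin (2 * n)) ℂ)
    (hanti : π.transpose = -π)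
    (p : MvPolynomial (Fin (2 * n) ⊕ Fin (2 * n)) ℂ) :
    moyalStep n π (rename Sum.swap p)
      = (-1 : ℂ) • rename Sum.swap (moyalStep n π p) := by
  have hswap : Function.Injective (Sum.swap : Fin (2 * n) ⊕ Fin (2 * n) → _) :=
    Function.LeftInverse.injective Sum.swap_swap
  have hπ : ∀ j k, π k j = -π j k := by
    intro j k
    have := congrFun (congrFun hanti j) k
    simpa [Matrix.transpose_apply, Matrix.neg_apply] using this
  have h2 : ∀ (j k : Fin (2 * n)) (q : MvPolynomial (Fin (2 * n) ⊕ Fin (2 * n)) ℂ),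
      rename Sum.swap (pderiv (Sum.inl j) (pderiv (Sum.inr k) q))
        = pderiv (Sum.inr j) (pderiv (Sum.inl k) (rename Sum.swap q)) := by
    intro j k q
    have e1 : rename Sum.swap (pderiv (Sum.inr k) q)
        = pderiv (Sum.inl k) (rename Sum.swap q) := by
      rw [← pderiv_rename hswap (Sum.inr k) q, Sum.swap_inr]
    rw [← e1, ← pderiv_rename hswap (Sum.inl j), Sum.swap_inl]
  conv_rhs =>
    rw [moyalStep_apply]
    simp only [map_sum, Finset.smul_sum, map_smul, h2, smul_smul]
  conv_rhs => rw [Finset.sum_comm]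
  rw [moyalStep_apply]
  refine Finset.sum_congr rfl fun u _ => ?_
  refine Finset.sum_congr rfl fun v _ => ?_
  have hc : (-1 : ℂ) * π v u = π u v := by rw [hπ u v]; ring
  rw [hc, pderiv_comm'' (Sum.inr v) (Sum.inl u)]

theorem pow_Sc (n : ℕ) (π : Matrix (Fin (2 * n)) (Fin (2 * n)) ℂ) (m : ℕ)
    (p : MvPolynomial (Fin (2 * n) ⊕ Fin (2 * n)) ℂ) :
    (moyalStep n π ^ m) (Sc (cR n) p)
      = (-1 : ℂ) ^ m • Sc (cR n) ((moyalStep n π ^ m) p) := by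
  simpa using conj_pow (moyalStep n π) (Sc (cR n)).toLinearMap (-1)
    (fun q => by simpa using step_Sc n π q) m p

theorem pow_swap (n : ℕ) (π : Matrix (Fin (2 * n)) (Fin (2 * n)) ℂ)
    (hanti : π.transpose = -π) (m : ℕ)
    (p : MvPolynomial (Fin (2 * n) ⊕ Fin (2 * n)) ℂ) :
    (moyalStep n π ^ m) (rename Sum.swap p)
      = (-1 : ℂ) ^ m • rename Sum.swap ((moyalStep n π ^ m) p) := by
  simpa using conj_pow (moyalStep n π)
    (rename (R := ℂ) (Sum.swap : Fin (2 * n) ⊕ Fin (2 * n) → _)).toLinearMap (-1)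
    (fun q => by simpa using step_swap n π hanti q) m p

/-! ### Degree bookkeeping for vanishing -/

/-- Total degree in the left (inl) variables of a monomial exponent. -/
def wL {n : ℕ} (m : Fin (2 * n) ⊕ Fin (2 * n) →₀ ℕ) : ℕ :=
  ∑ j : Fin (2 * n), m (Sum.inl j)

theorem wL_add {n : ℕ} (m₁ m₂ : Fin (2 * n) ⊕ Fin (2 * n) →₀ ℕ) :
    wL (m₁ + m₂) = wL m₁ + wL m₂ := by
  simp [wL, Finset.sum_add_distrib]

theorem wL_single_inl {n : ℕ} (j : Fin (2 * n)) :
    wL (Finsupp.single (Sum.inl j : Fin (2 * n) ⊕ Fin (2 * n)) 1) = 1 := by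
  classical
  simp [wL, Finsupp.single_apply]

theorem wL_single_inr {n : ℕ} (k : Fin (2 * n)) :
    wL (Finsupp.single (Sum.inr k : Fin (2 * n) ⊕ Fin (2 * n)) 1) = 0 := by
  classical
  simp [wL, Finsupp.single_apply]

theorem support_pderiv {ι : Type*} (i : ι) (q : MvPolynomial ι ℂ)
    (m : ι →₀ ℕ) (h : m ∈ (pderiv i q).support) :
    m + Finsupp.single i 1 ∈ q.support := by
  classical
  rw [mem_support_iff] at h
  have hq : pderiv i q
      = ∑ v ∈ q.support, monomial (v - Finsupp.single i 1) (coeff v q * ((v i : ℕ) : ℂ)) := by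
    conv_lhs => rw [q.as_sum]
    rw [map_sum]
    exact Finset.sum_congr rfl fun v _ => pderiv_monomial
  rw [hq, coeff_sum] at h
  obtain ⟨v, hv, hne⟩ := Finset.exists_ne_zero_of_sum_ne_zero h
  rw [coeff_monomial] at hne
  by_cases hvm : v - Finsupp.single i 1 = m
  · rw [if_pos hvm] at hne
    have hvi : v i ≠ 0 := by
      intro h0
      simp [h0] at hne
    have hle : Finsupp.single i 1 ≤ v := by
      rw [Finsupp.single_le_iff]
      omega
    have : m + Finsupp.single i 1 = v := by
      rw [← hvm, tsub_add_cancel_of_le hle]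
    rw [this]
    exact hv
  · rw [if_neg hvm] at hne
    exact absurd rfl hne

theorem step_support {n : ℕ} (π : Matrix (Fin (2 * n)) (Fin (2 * n)) ℂ)
    {p : MvPolynomial (Fin (2 * n) ⊕ Fin (2 * n)) ℂ} {e D : ℕ}
    (h : ∀ m ∈ p.support, wL m + e ≤ D) :
    ∀ m ∈ (moyalStep n π p).support, wL m + (e + 1) ≤ D := by
  intro m hm
  rw [mem_support_iff, moyalStep_apply, coeff_sum] at hm
  obtain ⟨j, _, hj⟩ := Finset.exists_ne_zero_of_sum_ne_zero hm
  rw [coeff_sum] at hj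
  obtain ⟨k, _, hk⟩ := Finset.exists_ne_zero_of_sum_ne_zero hj
  rw [coeff_smul] at hk
  have hne : coeff m (pderiv (Sum.inl j) (pderiv (Sum.inr k) p)) ≠ 0 := by
    intro h0
    rw [h0] at hk
    simp at hk
  have hm1 := support_pderiv _ _ _ (mem_support_iff.mpr hne)
  have hm2 := support_pderiv _ _ _ hm1
  have := h _ hm2
  rw [wL_add, wL_add, wL_single_inl, wL_single_inr] at this
  omega

theorem pow_support {n : ℕ} (π : Matrix (Fin (2 * n)) (Fin (2 * n)) ℂ) (k : ℕ) :
    ∀ {p : MvPolynomial (Fin (2 * n) ⊕ Fin (2 * n)) ℂ} {e D : ℕ},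
      (∀ m ∈ p.support, wL m + e ≤ D) →
      ∀ m ∈ ((moyalStep n π ^ k) p).support, wL m + (e + k) ≤ D := by
  induction k with
  | zero => intro p e D h m hm; simpa using h m (by simpa using hm)
  | succ k ih =>
    intro p e D h m hm
    rw [pow_succ, Module.End.mul_apply] at hm
    have := ih (step_support π h) m hm
    omega

theorem init_support {n : ℕ} (a b : MvPolynomial (Fin (2 * n)) ℂ) :
    ∀ m ∈ (rename Sum.inl a * rename Sum.inr b).support, wL m ≤ a.totalDegree := by
  classical
  intro m hm
  have hmem := support_mul _ _ hm
  rw [Finset.mem_add] at hmem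
  obtain ⟨m1, h1, m2, h2, rfl⟩ := hmem
  rw [support_rename_of_injective Sum.inl_injective, Finset.mem_image] at h1
  obtain ⟨u, hu, rfl⟩ := h1
  rw [support_rename_of_injective Sum.inr_injective, Finset.mem_image] at h2
  obtain ⟨v, hv, rfl⟩ := h2
  have e1 : wL (Finsupp.mapDomain Sum.inl u) = ∑ j : Fin (2 * n), u j := by
    refine Finset.sum_congr rfl fun j _ => ?_
    exact Finsupp.mapDomain_apply Sum.inl_injective u j
  have e2 : wL (Finsupp.mapDomain (Sum.inr : Fin (2 * n) → _) v) = 0 := by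
    refine Finset.sum_eq_zero fun j _ => ?_
    exact Finsupp.mapDomain_notin_range v _ (by simp)
  have e3 : (∑ j : Fin (2 * n), u j) ≤ a.totalDegree := by
    have := le_totalDegree hu
    rwa [Finsupp.sum_fintype _ _ (fun _ => rfl)] at this
  rw [wL_add, e1, e2]
  omega

theorem vanish {n : ℕ} (π : Matrix (Fin (2 * n)) (Fin (2 * n)) ℂ)
    (p q : MvPolynomial (Fin (2 * n)) ℂ) {m : ℕ} (hm : p.totalDegree < m) :
    constantCoeff ((moyalStep n π ^ m) (rename Sum.inl p * rename Sum.inr q)) = 0 := by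
  by_contra h0
  have h1 : (0 : Fin (2 * n) ⊕ Fin (2 * n) →₀ ℕ)
      ∈ ((moyalStep n π ^ m) (rename Sum.inl p * rename Sum.inr q)).support := by
    rw [mem_support_iff]
    rwa [constantCoeff_eq] at h0
  have h2 := pow_support π m (e := 0) (D := p.totalDegree)
    (by simpa using init_support p q) _ h1
  have h3 : wL (0 : Fin (2 * n) ⊕ Fin (2 * n) →₀ ℕ) = 0 := by simp [wL]
  omega

/-! ### The twist identities -/

theorem Sc_rename_inl {n : ℕ} (a : MvPolynomial (Fin (2 * n)) ℂ) :
    Sc (cR n) (rename Sum.inl a) = rename Sum.inl a := by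
  have h1 : ((fun t => cR n t • X t) ∘ Sum.inl)
      = fun j : Fin (2 * n) => (X (Sum.inl j) : MvPolynomial (Fin (2 * n) ⊕ Fin (2 * n)) ℂ) := by
    funext j
    simp [cR]
  rw [Sc, aeval_rename, h1, ← rename_eq_aeval]

theorem Sc_rename_inr {n : ℕ} (b : MvPolynomial (Fin (2 * n)) ℂ) :
    Sc (cR n) (rename Sum.inr b) = rename Sum.inr (parityMap n b) := by
  have h1 : ((fun t => cR n t • X t) ∘ Sum.inr)
      = fun j : Fin (2 * n) => (-(X (Sum.inr j)) : MvPolynomial (Fin (2 * n) ⊕ Fin (2 * n)) ℂ) := by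
    funext j
    simp [cR]
  have h2 : rename (Sum.inr : Fin (2 * n) → Fin (2 * n) ⊕ Fin (2 * n)) (parityMap n b)
      = aeval (fun j : Fin (2 * n) =>
          (-(X (Sum.inr j)) : MvPolynomial (Fin (2 * n) ⊕ Fin (2 * n)) ℂ)) b := by
    have h3 := MvPolynomial.comp_aeval
      (f := fun j : Fin (2 * n) => -(X j : MvPolynomial (Fin (2 * n)) ℂ))
      (φ := (rename (Sum.inr : Fin (2 * n) → Fin (2 * n) ⊕ Fin (2 * n)) :
        MvPolynomial (Fin (2 * n)) ℂ →ₐ[ℂ] MvPolynomial (Fin (2 * n) ⊕ Fin (2 * n)) ℂ))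
    calc rename (Sum.inr : Fin (2 * n) → Fin (2 * n) ⊕ Fin (2 * n)) (parityMap n b)
        = ((rename (Sum.inr : Fin (2 * n) → Fin (2 * n) ⊕ Fin (2 * n))).comp
            (aeval fun j : Fin (2 * n) => -(X j : MvPolynomial (Fin (2 * n)) ℂ))) b := rfl
      _ = aeval (fun j : Fin (2 * n) =>
            rename (Sum.inr : Fin (2 * n) → Fin (2 * n) ⊕ Fin (2 * n))
              (-(X j : MvPolynomial (Fin (2 * n)) ℂ))) b := by rw [h3]
      _ = aeval (fun j : Fin (2 * n) =>
            (-(X (Sum.inr j)) : MvPolynomial (Fin (2 * n) ⊕ Fin (2 * n)) ℂ)) b := by simp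
  rw [Sc, aeval_rename, h1, h2]

theorem swap_inl_mul {n : ℕ} (x y : MvPolynomial (Fin (2 * n)) ℂ) :
    rename Sum.swap (rename Sum.inl x * rename Sum.inr y)
      = rename Sum.inr x * rename Sum.inl y := by
  rw [map_mul, rename_rename, rename_rename]
  congr 1

theorem key_identity {n : ℕ} (π : Matrix (Fin (2 * n)) (Fin (2 * n)) ℂ)
    (hanti : π.transpose = -π) (m : ℕ) (a b : MvPolynomial (Fin (2 * n)) ℂ) :
    constantCoeff ((moyalStep n π ^ m) (rename Sum.inl (parityMap n b) * rename Sum.inr a))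
      = constantCoeff ((moyalStep n π ^ m) (rename Sum.inl a * rename Sum.inr b)) := by
  have hQ : rename Sum.inl (parityMap n b) * rename Sum.inr a
      = rename Sum.swap (rename Sum.inl a * rename Sum.inr (parityMap n b)) := by
    rw [swap_inl_mul]
    exact mul_comm _ _
  have hR : rename Sum.inl a * rename Sum.inr (parityMap n b)
      = Sc (cR n) (rename Sum.inl a * rename Sum.inr b) := by
    rw [map_mul, Sc_rename_inl, Sc_rename_inr]
  rw [hQ, pow_swap n π hanti, constantCoeff_smul, smul_eq_mul, constantCoeff_rename,
    hR, pow_Sc, constantCoeff_smul, smul_eq_mul, constantCoeff_Sc, ← mul_assoc, ← mul_pow]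
  norm_num

end MoyalAux

open MoyalAux in
/-- the bilinear form `B(a,b) = str(a ∗ b) = (a ∗ b)(0)` satisfies
`B(a, b) = B(b̃, a)`, where `b̃(y) = b(-y)`. -/
theorem bilinear_form_twist_symmetry (π : Matrix (Fin (2 * n)) (Fin (2 * n)) ℂ)
    (hanti : π.transpose = -π) (hnondeg : IsUnit π.det)
    (a b : MvPolynomial (Fin (2 * n)) ℂ) :
    constantCoeff (moyal n π a b) = constantCoeff (moyal n π (parityMap n b) a) := by
  set N := max a.totalDegree (parityMap n b).totalDegree with hN
  have key : ∀ m : ℕ,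
      constantCoeff ((moyalStep n π ^ m) (rename Sum.inl (parityMap n b) * rename Sum.inr a))
        = constantCoeff ((moyalStep n π ^ m) (rename Sum.inl a * rename Sum.inr b)) :=
    fun m => key_identity π hanti m a b
  have lhs_eq : constantCoeff (moyal n π a b)
      = ∑ m ∈ Finset.range (N + 1), (Complex.I ^ m / (m.factorial : ℂ)) *
          constantCoeff ((moyalStep n π ^ m) (rename Sum.inl a * rename Sum.inr b)) := by
    rw [moyal, map_sum,
      Finset.sum_subset
        (Finset.range_subset_range.mpr (Nat.add_le_add_right (le_max_left _ _) 1))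
        (fun m _ hm => by
          rw [Finset.mem_range, not_lt] at hm
          rw [constantCoeff_smul, smul_eq_mul, constantCoeff_rename,
            vanish π a b (by omega), mul_zero])]
    exact Finset.sum_congr rfl fun m _ => by
      rw [constantCoeff_smul, smul_eq_mul, constantCoeff_rename]
  have rhs_eq : constantCoeff (moyal n π (parityMap n b) a)
      = ∑ m ∈ Finset.range (N + 1), (Complex.I ^ m / (m.factorial : ℂ)) *
          constantCoeff ((moyalStep n π ^ m)
            (rename Sum.inl (parityMap n b) * rename Sum.inr a)) := by
    rw [moyal, map_sum,
      Finset.sum_subset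
        (Finset.range_subset_range.mpr (Nat.add_le_add_right (le_max_right _ _) 1))
        (fun m _ hm => by
          rw [Finset.mem_range, not_lt] at hm
          rw [constantCoeff_smul, smul_eq_mul, constantCoeff_rename,
            vanish π (parityMap n b) a (by omega), mul_zero])]
    exact Finset.sum_congr rfl fun m _ => by
      rw [constantCoeff_smul, smul_eq_mul, constantCoeff_rename]
  rw [lhs_eq, rhs_eq]
  exact Finset.sum_congr rfl fun m _ => by rw [key m]
end

section
/- In the Weyl algebra with twisted right module structure, the general solution of the system of equations y^j * α + α * y^j = 0 (for all j), equivalently 2y^j α + i π^{jk} ∂α/∂z^k = 0, in formal power series α(y,z) is α = e^{2iω(z,y)} g(y), where ω is the form dual to π and g is an arbitrary formal series in y. -/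
/-! The Weyl algebra with a twisted right module structure: formal power
series `α(y,z)` in variables `y^1,…,y^{2n}` (indexed by `Sum.inl`) and
`z^1,…,z^{2n}` (indexed by `Sum.inr`). -/

/-- Formal power series in the `y` and `z` variables. -/
abbrev FSeries (n : ℕ) := MvPowerSeries (Fin (2 * n) ⊕ Fin (2 * n)) ℂ

/-- Partial derivative `∂/∂z^k` on formal power series. -/
noncomputable def pdz {n : ℕ} (k : Fin (2 * n)) (f : FSeries n) : FSeries n :=
  fun e => ((e (Sum.inr k) : ℂ) + 1) * f (e + Finsupp.single (Sum.inr k) 1)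

/-- Multiplication by `y^j` on formal power series. -/
noncomputable def muly {n : ℕ} (j : Fin (2 * n)) (f : FSeries n) : FSeries n :=
  fun e => if 1 ≤ e (Sum.inl j) then f (e - Finsupp.single (Sum.inl j) 1) else 0

/-- The quadratic form `ω(z,y) = ω_{jk} z^j y^k` as a formal power series. -/
noncomputable def omegaZY (n : ℕ) (ω : Matrix (Fin (2 * n)) (Fin (2 * n)) ℂ) :
    FSeries n :=
  ∑ j : Fin (2 * n), ∑ k : Fin (2 * n),
    ω j k • MvPowerSeries.monomial
      (Finsupp.single (Sum.inr j) 1 + Finsupp.single (Sum.inl k) 1) 1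

/-- Total degree in the `z` variables of a monomial. -/
def zdeg {n : ℕ} (e : (Fin (2 * n) ⊕ Fin (2 * n)) →₀ ℕ) : ℕ :=
  ∑ j : Fin (2 * n), e (Sum.inr j)

/-- The exponential `e^{2iω(z,y)}`, defined coefficientwise: a monomial of
`z`-degree `m` only receives a contribution from the `m`-th term of the
exponential series. -/
noncomputable def expOmega (n : ℕ) (ω : Matrix (Fin (2 * n)) (Fin (2 * n)) ℂ) :
    FSeries n :=
  fun e => ((2 * Complex.I) ^ zdeg e / ((zdeg e).factorial : ℂ)) *
    MvPowerSeries.coeff e ((omegaZY n ω) ^ zdeg e)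

open scoped Classical in
/-- A power series in `y` alone, viewed as an element of `FSeries n`. -/
noncomputable def embY {n : ℕ} (g : MvPowerSeries (Fin (2 * n)) ℂ) : FSeries n :=
  fun e => if ∀ j, e (Sum.inr j) = 0
    then g (Finsupp.comapDomain Sum.inl e Sum.inl_injective.injOn) else 0

namespace TwistedAux

open Finset MvPowerSeries

variable {n : ℕ}

local notation "σn" => (Fin (2 * n) ⊕ Fin (2 * n))

/- pointwise evaluation lemmas -/
lemma add_apply (f g : FSeries n) (e : σn →₀ ℕ) : (f + g) e = f e + g e := rfl

lemma smul_apply (c : ℂ) (f : FSeries n) (e : σn →₀ ℕ) : (c • f) e = c * f e := rfl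

lemma zero_apply (e : σn →₀ ℕ) : (0 : FSeries n) e = 0 := rfl

lemma sum_apply {ι : Type*} (s : Finset ι) (f : ι → FSeries n) (e : σn →₀ ℕ) :
    (∑ i ∈ s, f i) e = ∑ i ∈ s, f i e :=
  map_sum (MvPowerSeries.coeff e) f s

lemma mul_apply (u v : FSeries n) (d : σn →₀ ℕ) :
    (u * v) d = ∑ p ∈ Finset.HasAntidiagonal.antidiagonal d, u p.1 * v p.2 :=
  MvPowerSeries.coeff_mul (n := d) (φ := u) (ψ := v)

lemma monomial_apply (u : σn →₀ ℕ) (c : ℂ) (d : σn →₀ ℕ) :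
    (MvPowerSeries.monomial u c) d = if d = u then c else 0 :=
  MvPowerSeries.coeff_monomial d u c

lemma pdz_apply (k : Fin (2 * n)) (f : FSeries n) (e : σn →₀ ℕ) :
    pdz k f e = ((e (Sum.inr k) : ℂ) + 1) * f (e + Finsupp.single (Sum.inr k) 1) := rfl

lemma muly_apply (j : Fin (2 * n)) (f : FSeries n) (e : σn →₀ ℕ) :
    muly j f e = if 1 ≤ e (Sum.inl j) then f (e - Finsupp.single (Sum.inl j) 1) else 0 := rfl

open scoped Classical in
lemma embY_apply' (g : MvPowerSeries (Fin (2 * n)) ℂ) (e : σn →₀ ℕ) :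
    embY g e = if ∀ j, e (Sum.inr j) = 0
      then g (Finsupp.comapDomain Sum.inl e Sum.inl_injective.injOn) else 0 := rfl

lemma sub_add_single (u : σn →₀ ℕ) (i : σn) (h : 1 ≤ u i) :
    u - Finsupp.single i 1 + Finsupp.single i 1 = u := by
  ext a
  rcases eq_or_ne a i with rfl | hne
  · simp [Finsupp.tsub_apply, Nat.sub_add_cancel h]
  · simp [Finsupp.tsub_apply, Finsupp.single_eq_of_ne' (Ne.symm hne)]

/-- The key shift identity for sums over antidiagonals. -/
lemma sum_shift (f g : FSeries n) (k : Fin (2 * n)) (e : σn →₀ ℕ) :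
    ∑ q ∈ Finset.HasAntidiagonal.antidiagonal (e + Finsupp.single (Sum.inr k) 1),
      (((q : (σn →₀ ℕ) × (σn →₀ ℕ)).1 (Sum.inr k) : ℂ) * (f q.1 * g q.2))
    = ∑ p ∈ Finset.HasAntidiagonal.antidiagonal e,
      (((p : (σn →₀ ℕ) × (σn →₀ ℕ)).1 (Sum.inr k) : ℂ) + 1)
        * (f (p.1 + Finsupp.single (Sum.inr k) 1) * g p.2) := by
  set κ : σn := Sum.inr k with hκ
  set δ : σn →₀ ℕ := Finsupp.single κ 1 with hδ
  refine Finset.sum_bij_ne_zero (fun q _ _ => (q.1 - δ, q.2)) ?_ ?_ ?_ ?_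
  · rintro ⟨a, b⟩ h₁ h₂
    rw [Finset.HasAntidiagonal.mem_antidiagonal] at h₁ ⊢
    have ha : 1 ≤ a κ := by
      by_contra hc
      have h0 : a κ = 0 := by omega
      simp only [h0, Nat.cast_zero, zero_mul, ne_eq, not_true_eq_false] at h₂
    have hs := sub_add_single a κ ha
    have h3 : (a - δ + b) + δ = e + δ := by
      rw [add_right_comm, hs]; exact h₁
    exact add_right_cancel h3
  · rintro ⟨a, b⟩ h₁ h₂ ⟨a', b'⟩ h₁' h₂' heq
    have ha : 1 ≤ a κ := by
      by_contra hc
      have h0 : a κ = 0 := by omega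
      simp only [h0, Nat.cast_zero, zero_mul, ne_eq, not_true_eq_false] at h₂
    have ha' : 1 ≤ a' κ := by
      by_contra hc
      have h0 : a' κ = 0 := by omega
      simp only [h0, Nat.cast_zero, zero_mul, ne_eq, not_true_eq_false] at h₂'
    have h1 : a - δ = a' - δ := congrArg Prod.fst heq
    have h2 : b = b' := congrArg Prod.snd heq
    have h3 : a = a' := by
      rw [← sub_add_single a κ ha, ← sub_add_single a' κ ha', h1]
    simp [h3, h2]
  · rintro ⟨a, b⟩ hb hgb
    rw [Finset.HasAntidiagonal.mem_antidiagonal] at hb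
    refine ⟨(a + δ, b), ?_, ?_, ?_⟩
    · rw [Finset.HasAntidiagonal.mem_antidiagonal]
      show (a + δ) + b = e + δ
      rw [add_right_comm, hb]
    · show ((((a + δ) κ : ℕ) : ℂ) * (f (a + δ) * g b)) ≠ 0
      have h4 : (a + δ) κ = a κ + 1 := by
        simp [hδ, Finsupp.add_apply, Finsupp.single_eq_same]
      rw [h4]
      push_cast
      exact hgb
    · show (a + δ - δ, b) = (a, b)
      simp only [add_tsub_cancel_right]
  · rintro ⟨a, b⟩ h₁ h₂
    have ha : 1 ≤ a κ := by
      by_contra hc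
      have h0 : a κ = 0 := by omega
      simp only [h0, Nat.cast_zero, zero_mul, ne_eq, not_true_eq_false] at h₂
    show ((a κ : ℕ) : ℂ) * (f a * g b)
        = (((a - δ) κ : ℂ) + 1) * (f (a - δ + δ) * g b)
    have hsub : (a - δ) κ + 1 = a κ := by
      rw [Finsupp.tsub_apply]
      simp only [hδ, Finsupp.single_eq_same]
      omega
    rw [sub_add_single a κ ha]
    congr 1
    rw [← hsub]
    push_cast
    ring

lemma pdz_mul (k : Fin (2 * n)) (f g : FSeries n) :
    pdz k (f * g) = pdz k f * g + f * pdz k g := by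
  classical
  funext e
  set κ : σn := Sum.inr k with hκ
  set δ : σn →₀ ℕ := Finsupp.single κ 1 with hδ
  rw [pdz_apply, add_apply, mul_apply f g, Finset.mul_sum]
  have step1 : ∀ q ∈ Finset.HasAntidiagonal.antidiagonal (e + δ),
      ((e κ : ℂ) + 1) * (f (q : (σn →₀ ℕ) × (σn →₀ ℕ)).1 * g q.2)
        = (q.1 κ : ℂ) * (f q.1 * g q.2) + (q.2 κ : ℂ) * (f q.1 * g q.2) := by
    rintro ⟨a, b⟩ hq
    rw [Finset.HasAntidiagonal.mem_antidiagonal] at hq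
    have h1 : a κ + b κ = e κ + 1 := by
      have := congrArg (fun u => u κ) hq
      simpa [Finsupp.add_apply, hδ, Finsupp.single_eq_same] using this
    have hc : (a κ : ℂ) + (b κ : ℂ) = (e κ : ℂ) + 1 := by
      exact_mod_cast congrArg (Nat.cast : ℕ → ℂ) h1
    show ((e κ : ℂ) + 1) * (f a * g b)
      = (a κ : ℂ) * (f a * g b) + (b κ : ℂ) * (f a * g b)
    rw [← hc]; ring
  rw [Finset.sum_congr rfl step1, Finset.sum_add_distrib]
  congr 1
  · rw [sum_shift f g k e, mul_apply (pdz k f) g e]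
    refine Finset.sum_congr rfl ?_
    rintro ⟨a, b⟩ _
    rw [pdz_apply]
    ring
  · have swap1 : ∑ q ∈ Finset.HasAntidiagonal.antidiagonal (e + δ),
        ((q : (σn →₀ ℕ) × (σn →₀ ℕ)).2 κ : ℂ) * (f q.1 * g q.2)
        = ∑ q ∈ Finset.HasAntidiagonal.antidiagonal (e + δ),
          ((q : (σn →₀ ℕ) × (σn →₀ ℕ)).1 κ : ℂ) * (g q.1 * f q.2) := by
      conv_lhs => rw [← Finset.HasAntidiagonal.map_swap_antidiagonal (n := e + δ)]
      rw [Finset.sum_map]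
      refine Finset.sum_congr rfl ?_
      rintro ⟨a, b⟩ _
      simp only [Function.Embedding.coeFn_mk, Prod.swap_prod_mk]
      ring
    rw [swap1, sum_shift g f k e, mul_apply f (pdz k g) e]
    conv_rhs => rw [← Finset.HasAntidiagonal.map_swap_antidiagonal (n := e)]
    rw [Finset.sum_map]
    refine Finset.sum_congr rfl ?_
    rintro ⟨a, b⟩ _
    simp only [Function.Embedding.coeFn_mk, Prod.swap_prod_mk]
    rw [pdz_apply]
    ring

lemma pdz_embY (k : Fin (2 * n)) (g : MvPowerSeries (Fin (2 * n)) ℂ) :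
    pdz k (embY g) = 0 := by
  funext e
  rw [pdz_apply, zero_apply, embY_apply', if_neg, mul_zero]
  intro h
  have := h k
  simp [Finsupp.add_apply, Finsupp.single_eq_same] at this

lemma muly_eq (j : Fin (2 * n)) (f : FSeries n) :
    muly j f = (MvPowerSeries.monomial (Finsupp.single (Sum.inl j) 1) 1) * f := by
  classical
  funext e
  have h := MvPowerSeries.coeff_monomial_mul (R := ℂ)
    (m := e) (n := Finsupp.single (Sum.inl j) 1) (φ := f) 1
  simp only [Finsupp.single_le_iff] at h
  rw [muly_apply]
  refine Eq.trans ?_ h.symm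
  split_ifs with hcond
  · rw [one_mul]; rfl
  · rfl

lemma muly_mul (j : Fin (2 * n)) (f g : FSeries n) :
    muly j (f * g) = muly j f * g := by
  rw [muly_eq, muly_eq, mul_assoc]

lemma pdz_smul (k : Fin (2 * n)) (c : ℂ) (f : FSeries n) :
    pdz k (c • f) = c • pdz k f := by
  funext e
  rw [pdz_apply, smul_apply, smul_apply, pdz_apply]
  ring

lemma pdz_sum {ι : Type*} (k : Fin (2 * n)) (s : Finset ι) (f : ι → FSeries n) :
    pdz k (∑ i ∈ s, f i) = ∑ i ∈ s, pdz k (f i) := by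
  funext e
  rw [pdz_apply, sum_apply, sum_apply, Finset.mul_sum]
  refine Finset.sum_congr rfl fun i _ => ?_
  rw [pdz_apply]

lemma add_single_eq_iff (e : σn →₀ ℕ) (j k l : Fin (2 * n)) :
    e + Finsupp.single (Sum.inr l) 1
      = Finsupp.single (Sum.inr j) 1 + Finsupp.single (Sum.inl k) 1
    ↔ j = l ∧ e = Finsupp.single (Sum.inl k) 1 := by
  constructor
  · intro h
    have hjl : j = l := by
      by_contra hne
      have := congrArg (fun u => u (Sum.inr l)) h
      simp [Finsupp.add_apply, Finsupp.single_eq_same, Finsupp.single_apply, hne] at this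
    subst hjl
    refine ⟨rfl, ?_⟩
    have h' : e + Finsupp.single (Sum.inr j) 1
        = Finsupp.single (Sum.inl k) 1 + Finsupp.single (Sum.inr j) 1 := by
      rw [h, add_comm]
    exact add_right_cancel h'
  · rintro ⟨rfl, rfl⟩
    rw [add_comm]

lemma pdz_omega (ω : Matrix (Fin (2 * n)) (Fin (2 * n)) ℂ) (l : Fin (2 * n)) :
    pdz l (omegaZY n ω)
      = ∑ k : Fin (2 * n), ω l k • (MvPowerSeries.monomial (Finsupp.single (Sum.inl k) 1) 1) := by
  classical
  funext e
  rw [pdz_apply, sum_apply, omegaZY, sum_apply]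
  simp only [sum_apply, smul_apply, monomial_apply]
  rw [Finset.mul_sum]
  have key : ∀ j : Fin (2 * n),
      ((e (Sum.inr l) : ℂ) + 1) * ∑ k : Fin (2 * n), ω j k *
        (if e + Finsupp.single (Sum.inr l) 1
            = Finsupp.single (Sum.inr j) 1 + Finsupp.single (Sum.inl k) 1 then (1:ℂ) else 0)
      = if j = l then
          (∑ k : Fin (2 * n), ω l k * (if e = Finsupp.single (Sum.inl k) 1 then (1:ℂ) else 0))
        else 0 := by
    intro j
    rcases eq_or_ne j l with rfl | hne
    · rw [if_pos rfl, Finset.mul_sum]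
      refine Finset.sum_congr rfl fun k _ => ?_
      rcases eq_or_ne e (Finsupp.single (Sum.inl k) 1) with rfl | hek
      · rw [if_pos rfl, if_pos ((add_single_eq_iff _ j k j).mpr ⟨rfl, rfl⟩)]
        have h0 : (Finsupp.single (Sum.inl k) 1 : σn →₀ ℕ) (Sum.inr j) = 0 := by
          simp [Finsupp.single_apply]
        rw [h0]
        push_cast
        ring
      · rw [if_neg hek, if_neg (by
          intro h
          exact hek ((add_single_eq_iff _ j k j).mp h).2)]
        simp
    · rw [if_neg hne]
      have h0 : ∀ k : Fin (2 * n), ω j k *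
          (if e + Finsupp.single (Sum.inr l) 1
              = Finsupp.single (Sum.inr j) 1 + Finsupp.single (Sum.inl k) 1 then (1:ℂ) else 0) = 0 := by
        intro k
        rw [if_neg (by
          intro h
          exact hne ((add_single_eq_iff _ j k l).mp h).1)]
        simp
      rw [Finset.sum_congr rfl fun k _ => h0 k]
      simp
  rw [Finset.sum_congr rfl fun j _ => key j, Finset.sum_ite_eq' Finset.univ l]
  simp

lemma pdz_pow (Ω : FSeries n) (l : Fin (2 * n)) :
    ∀ m : ℕ, pdz l (Ω ^ (m + 1)) = ((m + 1 : ℕ) : ℂ) • (Ω ^ m * pdz l Ω) := by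
  intro m
  induction m with
  | zero => simp [pdz_mul, pdz_smul]
  | succ m ih =>
    have h1 : Ω ^ (m + 2) = Ω * Ω ^ (m + 1) := by ring
    rw [h1, pdz_mul, ih]
    have h2 : pdz l Ω * Ω ^ (m + 1) = (1 : ℂ) • (Ω ^ (m + 1) * pdz l Ω) := by
      rw [one_smul]; ring
    have h3 : Ω * (((m + 1 : ℕ) : ℂ) • (Ω ^ m * pdz l Ω))
        = ((m + 1 : ℕ) : ℂ) • (Ω ^ (m + 1) * pdz l Ω) := by
      rw [mul_smul_comm]
      congr 1
      ring
    rw [h2, h3, ← add_smul]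
    congr 1
    push_cast
    ring

lemma zdeg_add_single_inr (e : σn →₀ ℕ) (l : Fin (2 * n)) :
    zdeg (e + Finsupp.single (Sum.inr l) 1) = zdeg e + 1 := by
  classical
  unfold zdeg
  simp only [Finsupp.add_apply]
  rw [Finset.sum_add_distrib]
  congr 1
  have h : ∀ j : Fin (2 * n), (Finsupp.single (Sum.inr l) 1 : σn →₀ ℕ) (Sum.inr j)
      = if l = j then 1 else 0 := by
    intro j
    simp [Finsupp.single_apply]
  rw [Finset.sum_congr rfl fun j _ => h j, Finset.sum_ite_eq Finset.univ l]
  simp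

lemma zdeg_sub_single_inl (e : σn →₀ ℕ) (k : Fin (2 * n)) :
    zdeg (e - Finsupp.single (Sum.inl k) 1) = zdeg e := by
  unfold zdeg
  refine Finset.sum_congr rfl fun j _ => ?_
  rw [Finsupp.tsub_apply]
  simp [Finsupp.single_apply]

/-- The key property of `expOmega`: it satisfies the recursion. -/
lemma rec_expOmega (ω : Matrix (Fin (2 * n)) (Fin (2 * n)) ℂ) (l : Fin (2 * n)) :
    pdz l (expOmega n ω)
      = (2 * Complex.I) • ∑ k : Fin (2 * n), ω l k • muly k (expOmega n ω) := by
  classical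
  funext e
  set Ω := omegaZY n ω with hΩ
  set m := zdeg e with hm
  have hlhs : pdz l (expOmega n ω) e
      = ((2 * Complex.I) ^ (m + 1) / ((m + 1).factorial : ℂ))
        * (pdz l (Ω ^ (m + 1))) e := by
    rw [pdz_apply, pdz_apply]
    have h : expOmega n ω (e + Finsupp.single (Sum.inr l) 1)
        = ((2 * Complex.I) ^ (m + 1) / ((m + 1).factorial : ℂ))
          * (Ω ^ (m + 1)) (e + Finsupp.single (Sum.inr l) 1) := by
      show ((2 * Complex.I) ^ zdeg (e + Finsupp.single (Sum.inr l) 1)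
          / ((zdeg (e + Finsupp.single (Sum.inr l) 1)).factorial : ℂ)) *
        MvPowerSeries.coeff _ ((omegaZY n ω) ^ zdeg (e + Finsupp.single (Sum.inr l) 1)) = _
      rw [zdeg_add_single_inr, ← hm]
      rfl
    rw [h]
    ring
  have hpdΩ : Ω ^ m * pdz l Ω = ∑ k : Fin (2 * n), ω l k • muly k (Ω ^ m) := by
    rw [pdz_omega, Finset.mul_sum]
    refine Finset.sum_congr rfl fun k _ => ?_
    rw [muly_eq, mul_smul_comm]
    congr 1
    ring
  have hterm : ∀ k : Fin (2 * n), (ω l k • muly k (expOmega n ω)) e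
      = ω l k * (((2 * Complex.I) ^ m / (m.factorial : ℂ)) * muly k (Ω ^ m) e) := by
    intro k
    rw [smul_apply, muly_apply, muly_apply]
    congr 1
    split_ifs with h
    · show expOmega n ω (e - Finsupp.single (Sum.inl k) 1) = _
      show ((2 * Complex.I) ^ zdeg (e - Finsupp.single (Sum.inl k) 1)
          / ((zdeg (e - Finsupp.single (Sum.inl k) 1)).factorial : ℂ)) *
        MvPowerSeries.coeff _ ((omegaZY n ω) ^ zdeg (e - Finsupp.single (Sum.inl k) 1)) = _
      rw [zdeg_sub_single_inl, ← hm]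
      rfl
    · ring
  have hc : ((2 * Complex.I) ^ (m + 1) / ((m + 1).factorial : ℂ)) * ((m + 1 : ℕ) : ℂ)
      = (2 * Complex.I) * ((2 * Complex.I) ^ m / (m.factorial : ℂ)) := by
    rw [Nat.factorial_succ]
    have hm1 : ((m : ℂ) + 1) ≠ 0 := Nat.cast_add_one_ne_zero m
    have hmf : ((m.factorial : ℂ)) ≠ 0 := Nat.cast_ne_zero.mpr (Nat.factorial_ne_zero m)
    push_cast
    field_simp
    ring
  calc pdz l (expOmega n ω) e
      = ((2 * Complex.I) ^ (m + 1) / ((m + 1).factorial : ℂ))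
        * (pdz l (Ω ^ (m + 1))) e := hlhs
    _ = ((2 * Complex.I) ^ (m + 1) / ((m + 1).factorial : ℂ))
        * ((((m + 1 : ℕ) : ℂ) • (Ω ^ m * pdz l Ω)) e) := by rw [pdz_pow Ω l m]
    _ = (((2 * Complex.I) ^ (m + 1) / ((m + 1).factorial : ℂ)) * ((m + 1 : ℕ) : ℂ))
        * ((Ω ^ m * pdz l Ω) e) := by rw [smul_apply]; ring
    _ = ((2 * Complex.I) * ((2 * Complex.I) ^ m / (m.factorial : ℂ)))
        * ((∑ k : Fin (2 * n), ω l k • muly k (Ω ^ m)) e) := by rw [hc, hpdΩ]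
    _ = (2 * Complex.I) * ∑ k : Fin (2 * n),
          ω l k * (((2 * Complex.I) ^ m / (m.factorial : ℂ)) * muly k (Ω ^ m) e) := by
        rw [sum_apply, Finset.mul_sum, Finset.mul_sum]
        refine Finset.sum_congr rfl fun k _ => ?_
        rw [smul_apply]
        ring
    _ = (2 * Complex.I) * ∑ k : Fin (2 * n), (ω l k • muly k (expOmega n ω)) e := by
        congr 1
        exact Finset.sum_congr rfl fun k _ => (hterm k).symm
    _ = ((2 * Complex.I) • ∑ k : Fin (2 * n), ω l k • muly k (expOmega n ω)) e := by
        rw [smul_apply, sum_apply]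

/-- The recursion predicate. -/
def Rec (ω : Matrix (Fin (2 * n)) (Fin (2 * n)) ℂ) (α : FSeries n) : Prop :=
  ∀ l : Fin (2 * n),
    pdz l α = (2 * Complex.I) • ∑ j : Fin (2 * n), ω l j • muly j α

lemma rec_mul_embY (ω : Matrix (Fin (2 * n)) (Fin (2 * n)) ℂ)
    (g : MvPowerSeries (Fin (2 * n)) ℂ) :
    Rec ω (expOmega n ω * embY g) := by
  intro l
  rw [pdz_mul, pdz_embY, mul_zero, add_zero, rec_expOmega ω l, smul_mul_assoc,
    Finset.sum_mul]
  congr 1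
  refine Finset.sum_congr rfl fun k _ => ?_
  rw [smul_mul_assoc, muly_mul]

lemma zdeg_eq_zero_iff (e : σn →₀ ℕ) :
    zdeg e = 0 ↔ ∀ j, e (Sum.inr j) = 0 := by
  unfold zdeg
  rw [Finset.sum_eq_zero_iff]
  exact ⟨fun h j => h j (Finset.mem_univ j), fun h j _ => h j⟩

lemma uniqueness (ω : Matrix (Fin (2 * n)) (Fin (2 * n)) ℂ) (α β : FSeries n)
    (hα : Rec ω α) (hβ : Rec ω β)
    (h0 : ∀ e, zdeg e = 0 → α e = β e) : α = β := by
  classical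
  funext e
  suffices h : ∀ m : ℕ, ∀ e : σn →₀ ℕ, zdeg e = m → α e = β e by
    exact h (zdeg e) e rfl
  intro m
  induction m using Nat.strong_induction_on with
  | _ m ih =>
    intro e he
    rcases m with _ | m
    · exact h0 e he
    · have hne : ∃ l : Fin (2 * n), e (Sum.inr l) ≠ 0 := by
        by_contra hc
        push_neg at hc
        have : zdeg e = 0 := (zdeg_eq_zero_iff e).mpr hc
        omega
      obtain ⟨l, hl⟩ := hne
      have hl1 : 1 ≤ e (Sum.inr l) := Nat.one_le_iff_ne_zero.mpr hl
      set e' := e - Finsupp.single (Sum.inr l) 1 with he'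
      have hee : e' + Finsupp.single (Sum.inr l) 1 = e := sub_add_single e _ hl1
      have hz' : zdeg e' = m := by
        have := zdeg_add_single_inr e' l
        rw [hee, he] at this
        omega
      have key : ∀ γ : FSeries n, Rec ω γ →
          ((e' (Sum.inr l) : ℂ) + 1) * γ e
            = (2 * Complex.I) * ∑ j : Fin (2 * n), ω l j * muly j γ e' := by
        intro γ hγ
        have h := congrFun (hγ l) e'
        rw [pdz_apply, smul_apply, sum_apply, hee] at h
        rw [h]
        refine congrArg _ (Finset.sum_congr rfl fun j _ => ?_)
        rw [smul_apply]
      have hmul_eq : ∀ j : Fin (2 * n), muly j α e' = muly j β e' := by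
        intro j
        rw [muly_apply, muly_apply]
        split_ifs with h
        · exact ih m (Nat.lt_succ_self m) _ (by rw [zdeg_sub_single_inl, hz'])
        · rfl
      have hA := key α hα
      have hB := key β hβ
      have hsum : (∑ j : Fin (2 * n), ω l j * muly j α e')
          = ∑ j : Fin (2 * n), ω l j * muly j β e' :=
        Finset.sum_congr rfl fun j _ => by rw [hmul_eq j]
      have hfin : ((e' (Sum.inr l) : ℂ) + 1) * α e = ((e' (Sum.inr l) : ℂ) + 1) * β e := by
        rw [hA, hB, hsum]
      exact mul_left_cancel₀ (Nat.cast_add_one_ne_zero (e' (Sum.inr l))) hfin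

lemma mul_embY_apply_zdeg_zero (ω : Matrix (Fin (2 * n)) (Fin (2 * n)) ℂ)
    (g : MvPowerSeries (Fin (2 * n)) ℂ) (e : σn →₀ ℕ) (he : ∀ j, e (Sum.inr j) = 0) :
    (expOmega n ω * embY g) e = embY g e := by
  classical
  rw [mul_apply]
  rw [Finset.sum_eq_single (0, e)]
  · have hz : zdeg (0 : σn →₀ ℕ) = 0 := by simp [zdeg]
    have h1 : expOmega n ω 0 = 1 := by
      show ((2 * Complex.I) ^ zdeg (0 : σn →₀ ℕ) / ((zdeg (0 : σn →₀ ℕ)).factorial : ℂ)) *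
        MvPowerSeries.coeff 0 ((omegaZY n ω) ^ zdeg (0 : σn →₀ ℕ)) = 1
      rw [hz]
      simp [MvPowerSeries.coeff_one]
    rw [h1, one_mul]
  · rintro ⟨a, b⟩ hab hne
    rw [Finset.HasAntidiagonal.mem_antidiagonal] at hab
    have haz : ∀ j, a (Sum.inr j) = 0 := by
      intro j
      have h2 := congrArg (fun u => u (Sum.inr j)) hab
      simp only [Finsupp.add_apply] at h2
      have h3 := he j
      omega
    have hza : zdeg a = 0 := (zdeg_eq_zero_iff a).mpr haz
    have ha0 : a ≠ 0 := by
      intro h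
      apply hne
      have hb : b = e := by
        rw [h, zero_add] at hab
        exact hab
      rw [h, hb]
    have h4 : expOmega n ω a = 0 := by
      show ((2 * Complex.I) ^ zdeg a / ((zdeg a).factorial : ℂ)) *
        MvPowerSeries.coeff a ((omegaZY n ω) ^ zdeg a) = 0
      rw [hza]
      simp [MvPowerSeries.coeff_one, ha0]
    show expOmega n ω a * embY g b = 0
    rw [h4, zero_mul]
  · intro h
    exact absurd (Finset.HasAntidiagonal.mem_antidiagonal.mpr (zero_add e)) h

lemma embY_apply (g : MvPowerSeries (Fin (2 * n)) ℂ) (e : σn →₀ ℕ)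
    (he : ∀ j, e (Sum.inr j) = 0) :
    embY g e = g (Finsupp.comapDomain Sum.inl e Sum.inl_injective.injOn) := by
  rw [embY_apply', if_pos he]

lemma embDomain_comap (e : σn →₀ ℕ) (he : ∀ j, e (Sum.inr j) = 0) :
    Finsupp.embDomain ⟨Sum.inl, Sum.inl_injective⟩
      (Finsupp.comapDomain Sum.inl e Sum.inl_injective.injOn) = e := by
  ext a
  cases a with
  | inl a =>
    exact (Finsupp.embDomain_apply_self ⟨Sum.inl, Sum.inl_injective⟩
      (Finsupp.comapDomain Sum.inl e Sum.inl_injective.injOn) a).trans rfl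
  | inr j =>
    rw [Finsupp.embDomain_notin_range _ _ _ (by simp)]
    exact (he j).symm

lemma matrix_sum_helper (M N : Matrix (Fin (2 * n)) (Fin (2 * n)) ℂ)
    (x : Fin (2 * n) → ℂ) (j : Fin (2 * n)) :
    ∑ k : Fin (2 * n), M j k * ∑ m : Fin (2 * n), N k m * x m
      = ∑ m : Fin (2 * n), (M * N) j m * x m := by
  simp_rw [Finset.mul_sum, Matrix.mul_apply, Finset.sum_mul]
  rw [Finset.sum_comm]
  refine Finset.sum_congr rfl fun m _ => Finset.sum_congr rfl fun k _ => by ring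

lemma one_matrix_sum (x : Fin (2 * n) → ℂ) (j : Fin (2 * n)) :
    ∑ m : Fin (2 * n), (1 : Matrix (Fin (2 * n)) (Fin (2 * n)) ℂ) j m * x m = x j := by
  simp [Matrix.one_apply]

end TwistedAux

open TwistedAux Finset

/-- in the Weyl algebra with twisted right module structure, the
general solution of `y^j ∗ α + α ∗ y^j = 0` (for all `j`), equivalently
`2 y^j α + i π^{jk} ∂α/∂z^k = 0`, in formal power series `α(y,z)` is exactly
`α = e^{2iω(z,y)} g(y)` with `g` an arbitrary formal power series in `y`,
where `ω` is the two-form dual to `π`. -/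
theorem twisted_invariants_solution (n : ℕ)
    (π ω : Matrix (Fin (2 * n)) (Fin (2 * n)) ℂ)
    (hanti : π.transpose = -π) (hdual : π * ω = 1)
    (α : FSeries n) :
    (∀ j : Fin (2 * n),
        (2 : ℂ) • muly j α + Complex.I • ∑ k : Fin (2 * n), π j k • pdz k α = 0)
      ↔ ∃ g : MvPowerSeries (Fin (2 * n)) ℂ, α = expOmega n ω * embY g := by
  classical
  have hdual' : ω * π = 1 := mul_eq_one_comm.mp hdual
  constructor
  · intro hH
    have hRec : TwistedAux.Rec ω α := by
      intro l
      funext e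
      have hpt : ∀ j : Fin (2 * n),
          2 * muly j α e + Complex.I * ∑ k : Fin (2 * n), π j k * pdz k α e = 0 := by
        intro j
        have h := congrFun (hH j) e
        rw [TwistedAux.add_apply, TwistedAux.smul_apply, TwistedAux.smul_apply,
          TwistedAux.sum_apply, TwistedAux.zero_apply] at h
        simp only [TwistedAux.smul_apply] at h
        exact h
      have h1 : ∑ j : Fin (2 * n), ω l j *
          (2 * muly j α e + Complex.I * ∑ k : Fin (2 * n), π j k * pdz k α e) = 0 := by
        rw [Finset.sum_congr rfl fun j _ => by rw [hpt j]]
        simp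
      have h2 : ∑ j : Fin (2 * n), ω l j *
          (2 * muly j α e + Complex.I * ∑ k : Fin (2 * n), π j k * pdz k α e)
          = 2 * (∑ j : Fin (2 * n), ω l j * muly j α e) + Complex.I * pdz l α e := by
        rw [Finset.sum_congr rfl fun j _ => mul_add (ω l j) _ _, Finset.sum_add_distrib]
        congr 1
        · rw [Finset.mul_sum]
          exact Finset.sum_congr rfl fun j _ => by ring
        · have h3 : ∑ j : Fin (2 * n), ω l j *
              (Complex.I * ∑ k : Fin (2 * n), π j k * pdz k α e)
              = Complex.I * ∑ j : Fin (2 * n), ω l j *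
                ∑ k : Fin (2 * n), π j k * pdz k α e := by
            rw [Finset.mul_sum]
            exact Finset.sum_congr rfl fun j _ => by ring
          rw [h3, TwistedAux.matrix_sum_helper ω π (fun k => pdz k α e) l, hdual',
            TwistedAux.one_matrix_sum (fun k => pdz k α e) l]
      have hcomb : 2 * (∑ j : Fin (2 * n), ω l j * muly j α e)
          + Complex.I * pdz l α e = 0 := by rw [← h2]; exact h1
      have hgoal : pdz l α e
          = 2 * Complex.I * ∑ j : Fin (2 * n), ω l j * muly j α e := by
        linear_combination (-Complex.I) * hcomb + (pdz l α e) * Complex.I_mul_I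
      rw [hgoal, TwistedAux.smul_apply, TwistedAux.sum_apply]
      simp only [TwistedAux.smul_apply]
    refine ⟨fun d => α (Finsupp.embDomain ⟨Sum.inl, Sum.inl_injective⟩ d), ?_⟩
    refine TwistedAux.uniqueness ω α _ hRec (TwistedAux.rec_mul_embY ω _) ?_
    intro e he
    have he' : ∀ j, e (Sum.inr j) = 0 := (TwistedAux.zdeg_eq_zero_iff e).mp he
    exact ((TwistedAux.mul_embY_apply_zdeg_zero ω _ e he').trans ((TwistedAux.embY_apply _ e he').trans
      (congrArg α (TwistedAux.embDomain_comap e he')))).symm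
  · rintro ⟨g, rfl⟩
    set β := expOmega n ω * embY g with hβ
    have hRec : TwistedAux.Rec ω β := TwistedAux.rec_mul_embY ω g
    intro j
    funext e
    rw [TwistedAux.add_apply, TwistedAux.smul_apply, TwistedAux.smul_apply,
      TwistedAux.sum_apply, TwistedAux.zero_apply]
    simp only [TwistedAux.smul_apply]
    have hpd : ∀ k : Fin (2 * n), pdz k β e
        = 2 * Complex.I * ∑ m : Fin (2 * n), ω k m * muly m β e := by
      intro k
      have h := congrFun (hRec k) e
      rw [TwistedAux.smul_apply, TwistedAux.sum_apply] at h
      simp only [TwistedAux.smul_apply] at h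
      exact h
    rw [Finset.sum_congr rfl fun k _ => by rw [hpd k]]
    have h4 : ∑ k : Fin (2 * n), π j k *
        (2 * Complex.I * ∑ m : Fin (2 * n), ω k m * muly m β e)
        = 2 * Complex.I * ∑ k : Fin (2 * n), π j k *
          ∑ m : Fin (2 * n), ω k m * muly m β e := by
      rw [Finset.mul_sum]
      exact Finset.sum_congr rfl fun k _ => by ring
    rw [h4, TwistedAux.matrix_sum_helper π ω (fun m => muly m β e) j, hdual,
      TwistedAux.one_matrix_sum (fun m => muly m β e) j]
    linear_combination (2 * muly j β e) * Complex.I_mul_I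
end

section
/- Let Δ(v_0,...,v_{2n}) ∈ {0, ±1} be the signed characteristic function of the oriented simplex spanned by v_0,...,v_{2n} ∈ R^{2n} (value ±1 according to orientation if the origin lies in the interior of the simplex, 0 if the origin is outside). Then for any 2n+2 points v_0,...,v_{2n+1} in general position in R^{2n}, Σ_{k=0}^{2n+1} (−1)^k Δ(v_0,...,v̂_k,...,v_{2n+1}) = 0; i.e. Δ is an Alexander–Spanier 2n-cocycle. -/
open Set
open scoped Classical

section Aux

open Matrix

lemma detSnoc (m : ℕ) (u : Fin (m+1) → Fin m → ℝ) :
    Matrix.det (Matrix.of fun i : Fin (m+1) => Fin.snoc (u i) (1:ℝ)) =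
    (-1:ℝ)^m * Matrix.det (Matrix.of fun i j : Fin m => u i.succ j - u 0 j) := by
  classical
  set M : Matrix (Fin (m+1)) (Fin (m+1)) ℝ := Matrix.of fun i => Fin.snoc (u i) 1 with hM
  set E : Matrix (Fin (m+1)) (Fin (m+1)) ℝ := Matrix.of (fun i j =>
    if i = j then 1 else if j = 0 then -1 else 0) with hEdef
  have hE : E.det = 1 := by
    rw [Matrix.det_of_lowerTriangular E]
    · simp [E]
    · intro i j hij
      have hij' : (i : Fin (m+1)) < j := hij
      have h1 : i ≠ j := ne_of_lt hij'
      have h2 : j ≠ 0 := by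
        intro h; rw [h] at hij'; exact absurd hij' (Fin.not_lt_zero i)
      simp [E, h1, h2]
  have hEM : ∀ i j, (E * M) i j = if i = 0 then M 0 j else M i j - M 0 j := by
    intro i j
    rw [Matrix.mul_apply]
    by_cases hi : i = 0
    · subst hi
      rw [if_pos rfl]
      rw [Finset.sum_eq_single 0]
      · simp [E]
      · intro b _ hb; simp [E, hb.symm, hb]
      · simp
    · rw [if_neg hi]
      rw [Finset.sum_eq_add_of_mem i 0 (Finset.mem_univ _) (Finset.mem_univ _) hi]
      · simp [E, hi]; ring
      · intro b _ hb
        simp [E, hb.1, Ne.symm hb.1, hb.2]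
  have key : M.det = (E * M).det := by rw [Matrix.det_mul, hE, one_mul]
  rw [key]
  set N := E * M with hNdef
  rw [Matrix.det_succ_column N (Fin.last m)]
  rw [Finset.sum_eq_single 0]
  · have h1 : N 0 (Fin.last m) = 1 := by simp [hEM, hM]
    have h2 : N.submatrix (Fin.succAbove 0) (Fin.last m).succAbove =
        Matrix.of fun i j : Fin m => u i.succ j - u 0 j := by
      ext i j
      simp [Matrix.submatrix_apply, Fin.succAbove_last, Fin.zero_succAbove, hEM, hM,
        Fin.snoc_castSucc, Fin.succ_ne_zero]
    rw [h1, h2]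
    simp [Fin.val_last]
  · intro b _ hb
    have : N b (Fin.last m) = 0 := by
      simp [hEM, hb, hM]
    simp [this]
  · simp

open Matrix

lemma cofactor_sum (m : ℕ) (W : Matrix (Fin (m+2)) (Fin (m+1)) ℝ) (j : Fin (m+1)) :
    ∑ k : Fin (m+2), (-1:ℝ)^(k:ℕ) * Matrix.det (W.submatrix k.succAbove id) * W k j = 0 := by
  classical
  set B : Matrix (Fin (m+2)) (Fin (m+2)) ℝ := Matrix.of fun i => Fin.snoc (W i) (W i j) with hB
  have hdet : B.det = 0 := by
    apply Matrix.det_zero_of_column_eq (i := (j.castSucc : Fin (m+2))) (j := Fin.last (m+1))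
    · exact ne_of_lt (Fin.castSucc_lt_last j)
    · intro k
      simp [hB, Fin.snoc_castSucc, Fin.snoc_last]
  have hexp := Matrix.det_succ_column B (Fin.last (m+1))
  rw [hdet] at hexp
  have hterm : ∀ k : Fin (m+2),
      (-1:ℝ)^((k:ℕ) + ((Fin.last (m+1) : Fin (m+2)):ℕ)) * B k (Fin.last (m+1)) *
        Matrix.det (B.submatrix k.succAbove (Fin.last (m+1)).succAbove) =
      (-1:ℝ)^(m+1) * ((-1:ℝ)^(k:ℕ) * Matrix.det (W.submatrix k.succAbove id) * W k j) := by
    intro k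
    have h1 : B k (Fin.last (m+1)) = W k j := by simp [hB]
    have h2 : B.submatrix k.succAbove (Fin.last (m+1)).succAbove = W.submatrix k.succAbove id := by
      ext a b
      simp [hB, Fin.succAbove_last, Fin.snoc_castSucc]
    rw [h1, h2]
    rw [Fin.val_last, pow_add]
    ring
  rw [Finset.sum_congr rfl (fun k _ => hterm k), ← Finset.mul_sum] at hexp
  have hne : ((-1:ℝ)^(m+1)) ≠ 0 := by
    intro h; simpa using congrArg (|·|) h
  exact (mul_eq_zero.mp hexp.symm).resolve_left hne

open Matrix

lemma det_diff_ne_zero (m : ℕ) (u : Fin (m+1) → Fin m → ℝ)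
    (h : AffineIndependent ℝ u) :
    Matrix.det (Matrix.of fun i j : Fin m => u i.succ j - u 0 j) ≠ 0 := by
  classical
  intro hdet
  obtain ⟨w, hw, hmul⟩ := Matrix.exists_vecMul_eq_zero_iff.mpr hdet
  set d : Fin (m+1) → ℝ := Fin.cases (-∑ i, w i) w with hd
  have hd0 : d 0 = -∑ i, w i := rfl
  have hds : ∀ i : Fin m, d i.succ = w i := fun i => rfl
  have hsum : ∑ i, d i = 0 := by
    rw [Fin.sum_univ_succ, hd0]
    simp [hds]
  have hcomb : ∑ i, d i • u i = 0 := by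
    funext j
    have hj := congr_fun hmul j
    simp only [Matrix.vecMul, dotProduct, Matrix.of_apply, Pi.zero_apply] at hj
    simp only [Finset.sum_apply, Pi.smul_apply, smul_eq_mul, Pi.zero_apply]
    rw [Fin.sum_univ_succ, hd0]
    simp only [hds]
    rw [← hj]
    simp only [mul_sub, Finset.sum_sub_distrib, ← Finset.sum_mul]
    ring
  have := affineIndependent_iff.mp h Finset.univ d hsum hcomb
  apply hw
  funext i
  exact (hds i) ▸ this i.succ (Finset.mem_univ _)

open Set

lemma interior_iff (m : ℕ) (u : Fin (m+1) → Fin m → ℝ) (h : AffineIndependent ℝ u) :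
    (0 : Fin m → ℝ) ∈ interior (convexHull ℝ (Set.range u)) ↔
    ∃ w : Fin (m+1) → ℝ, (∀ i, 0 < w i) ∧ ∑ i, w i = 1 ∧ ∑ i, w i • u i = 0 := by
  classical
  have htop : affineSpan ℝ (Set.range u) = ⊤ := by
    rw [h.affineSpan_eq_top_iff_card_eq_finrank_add_one]
    simp
  let b : AffineBasis (Fin (m+1)) ℝ (Fin m → ℝ) := ⟨u, h, htop⟩
  have hb : ⇑b = u := rfl
  have hrange : Set.range ⇑b = Set.range u := by rw [hb]
  have hint := b.interior_convexHull
  rw [hrange] at hint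
  rw [hint]
  constructor
  · intro hx
    refine ⟨fun i => b.coord i 0, hx, b.sum_coord_apply_eq_one 0, ?_⟩
    have := b.linear_combination_coord_eq_self 0
    rw [hb] at this
    exact this
  · rintro ⟨w, hpos, hsum, hcomb⟩ i
    have h0 : (0 : Fin m → ℝ) = Finset.univ.affineCombination ℝ b w := by
      rw [Finset.univ.affineCombination_eq_linear_combination ⇑b w hsum, hb, hcomb]
    have : b.coord i 0 = w i := by
      rw [h0]
      exact b.coord_apply_combination_of_mem (Finset.mem_univ i) hsum
    rw [this]
    exact hpos i

lemma qual_uniq {N : ℕ} (μ0 c : Fin N → ℝ) {k k' : Fin N}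
    (hq : ∃ t, μ0 k + t * c k = 0 ∧ ∀ i, i ≠ k → 0 < μ0 i + t * c i)
    (hq' : ∃ t, μ0 k' + t * c k' = 0 ∧ ∀ i, i ≠ k' → 0 < μ0 i + t * c i)
    (hck : 0 < c k) (hck' : 0 < c k') : k = k' := by
  obtain ⟨t, ht0, htp⟩ := hq
  obtain ⟨t', ht0', htp'⟩ := hq'
  by_contra hne
  have h1 : 0 < μ0 k' + t * c k' := htp k' (Ne.symm hne)
  have h2 : 0 < μ0 k + t' * c k := htp' k hne
  rcases lt_trichotomy t t' with h | h | h
  · nlinarith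
  · subst h; linarith
  · nlinarith

lemma partner (n : ℕ) (v : Fin (2*n+2) → Fin (2*n) → ℝ)
    (havoid : ∀ s : Finset (Fin (2*n+2)), s.card ≤ 2*n →
      (0 : Fin (2*n) → ℝ) ∉ convexHull ℝ (v '' ↑s))
    (μ0 c : Fin (2*n+2) → ℝ)
    (hμsum : ∑ i, μ0 i = 1) (hμcomb : ∑ i, μ0 i • v i = 0)
    (hcsum : ∑ i, c i = 0) (hccomb : ∑ i, c i • v i = 0)
    (k : Fin (2*n+2)) (hck : 0 < c k)
    (hq : ∃ t, μ0 k + t * c k = 0 ∧ ∀ i, i ≠ k → 0 < μ0 i + t * c i) :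
    ∃ k', c k' < 0 ∧ ∃ t, μ0 k' + t * c k' = 0 ∧ ∀ i, i ≠ k' → 0 < μ0 i + t * c i := by
  classical
  obtain ⟨t0, ht0, htp⟩ := hq
  set Neg : Finset (Fin (2*n+2)) := Finset.univ.filter (fun i => c i < 0) with hNeg
  have hNegne : Neg.Nonempty := by
    by_contra hemp
    rw [Finset.not_nonempty_iff_eq_empty] at hemp
    have hnn : ∀ i ∈ Finset.univ, 0 ≤ c i := by
      intro i _
      by_contra hlt
      push_neg at hlt
      have : i ∈ Neg := by simp [hNeg, hlt]
      simp [hemp] at this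
    have := Finset.single_le_sum hnn (Finset.mem_univ k)
    rw [hcsum] at this
    linarith
  set τ : Fin (2*n+2) → ℝ := fun i => -μ0 i / c i with hτ
  obtain ⟨k', hk'Neg, hk'min⟩ := Finset.exists_min_image Neg τ hNegne
  have hck' : c k' < 0 := by simpa [hNeg] using hk'Neg
  set s := τ k' with hs
  -- roots: for i with c i ≠ 0, μ0 i + τ i * c i = 0
  have hroot : ∀ i, c i ≠ 0 → μ0 i + τ i * c i = 0 := by
    intro i hi
    simp only [hτ]
    rw [div_mul_cancel₀ _ hi]; ring
  have hsk' : μ0 k' + s * c k' = 0 := hroot k' (ne_of_lt hck')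
  have hkk' : k ≠ k' := by intro h; rw [h] at hck; linarith
  -- s > t0
  have hst0 : t0 < s := by
    have h1 : 0 < μ0 k' + t0 * c k' := htp k' (Ne.symm hkk')
    nlinarith
  -- points with c i ≥ 0 are strictly positive at s (for i ≠ k')
  have hposnn : ∀ i, 0 ≤ c i → 0 < μ0 i + s * c i := by
    intro i hci
    by_cases hik : i = k
    · subst hik
      have hci' : 0 < c i := hck
      nlinarith
    · have h1 : 0 < μ0 i + t0 * c i := htp i hik
      nlinarith
  -- points in Neg are nonneg at s
  have hnegnn : ∀ i, c i < 0 → 0 ≤ μ0 i + s * c i := by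
    intro i hci
    have hiNeg : i ∈ Neg := by simp [hNeg, hci]
    have hle : s ≤ τ i := hk'min i hiNeg
    have hri := hroot i (ne_of_lt hci)
    nlinarith
  have hallnn : ∀ i, 0 ≤ μ0 i + s * c i := by
    intro i
    rcases lt_or_ge (c i) 0 with h | h
    · exact hnegnn i h
    · exact le_of_lt (hposnn i h)
  -- strictness for i ∈ Neg, i ≠ k'
  have hnegpos : ∀ i, c i < 0 → i ≠ k' → 0 < μ0 i + s * c i := by
    intro i hci hik'
    rcases lt_or_eq_of_le (hnegnn i hci) with h | h
    · exact h
    -- h : 0 = μ0 i + s * c i : two coordinates vanish, contradiction with havoid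
    exfalso
    set w : Fin (2*n+2) → ℝ := fun j => μ0 j + s * c j with hw
    have hwsum : ∑ j, w j = 1 := by
      simp only [hw]
      rw [Finset.sum_add_distrib, hμsum, ← Finset.mul_sum, hcsum]
      ring
    have hwcomb : ∑ j, w j • v j = 0 := by
      simp only [hw, add_smul, smul_smul]
      rw [Finset.sum_add_distrib, hμcomb]
      have : ∑ j, (s * c j) • v j = s • ∑ j, c j • v j := by
        rw [Finset.smul_sum]
        congr 1
        funext j
        rw [smul_smul]
      rw [this, hccomb, smul_zero, add_zero]
    set S : Finset (Fin (2*n+2)) := (Finset.univ.erase k').erase i with hS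
    have hiS : i ∈ Finset.univ.erase k' := Finset.mem_erase.mpr ⟨hik', Finset.mem_univ i⟩
    have hScard : S.card ≤ 2*n := by
      rw [hS, Finset.card_erase_of_mem hiS, Finset.card_erase_of_mem (Finset.mem_univ k')]
      simp
    apply havoid S hScard
    have hwk' : w k' = 0 := hsk'
    have hwi : w i = 0 := h.symm
    have hsum' : ∑ j ∈ S, w j = 1 := by
      rw [hS]
      rw [Finset.sum_erase _ (by exact hwi), Finset.sum_erase _ (by exact hwk')]
      exact hwsum
    have hcomb' : ∑ j ∈ S, w j • v j = 0 := by
      rw [hS]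
      rw [Finset.sum_erase _ (by rw [hwi, zero_smul]),
        Finset.sum_erase _ (by rw [hwk', zero_smul])]
      exact hwcomb
    have := Finset.centerMass_mem_convexHull (t := S) (w := w) (z := v)
      (fun j hj => hallnn j) (by rw [hsum']; norm_num)
      (fun j hj => Set.mem_image_of_mem v (by exact_mod_cast hj))
    rwa [Finset.centerMass_eq_of_sum_1 _ _ hsum', hcomb'] at this
  refine ⟨k', hck', s, hsk', ?_⟩
  intro i hik'
  rcases lt_or_ge (c i) 0 with h | h
  · exact hnegpos i h hik'
  · exact hposnn i h
end Aux

/-- The signed characteristic function `Δ(v_0,…,v_{2n})` of the oriented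
simplex spanned by `v_0,…,v_{2n} ⊂ ℝ^{2n}`: it is `±1` (the sign of
`det(v_1 - v_0, …, v_{2n} - v_0)`) if the origin lies in the interior of the
convex hull of the points, and `0` otherwise. -/
noncomputable def simplexChar (n : ℕ) (v : Fin (2 * n + 1) → (Fin (2 * n) → ℝ)) : ℤ :=
  if (0 : Fin (2 * n) → ℝ) ∈ interior (convexHull ℝ (Set.range v)) then
    (if 0 < Matrix.det (Matrix.of fun i j : Fin (2 * n) => v i.succ j - v 0 j)
      then 1 else -1)
  else 0

/-- for `2n+2` points of `ℝ^{2n}` in general position (every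
`2n+1` of them affinely independent, and the origin avoiding the convex hulls
of all subsets of at most `2n` of the points, hence all facets of all
sub-simplices), the alternating sum `Σ_k (-1)^k Δ(v_0,…,v̂_k,…,v_{2n+1})`
vanishes; i.e. `Δ` is an Alexander–Spanier `2n`-cocycle. -/
theorem simplexChar_cocycle (n : ℕ) (v : Fin (2 * n + 2) → (Fin (2 * n) → ℝ))
    (hindep : ∀ k : Fin (2 * n + 2),
      AffineIndependent ℝ (fun i : Fin (2 * n + 1) => v (k.succAbove i)))
    (havoid : ∀ s : Finset (Fin (2 * n + 2)), s.card ≤ 2 * n →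
      (0 : Fin (2 * n) → ℝ) ∉ convexHull ℝ (v '' ↑s)) :
    ∑ k : Fin (2 * n + 2), ((-1 : ℤ) ^ (k : ℕ)) *
      simplexChar n (fun i => v (k.succAbove i)) = 0 := by
  set D : Fin (2*n+2) → ℝ := fun k =>
    Matrix.det (Matrix.of fun i j : Fin (2*n) => v (k.succAbove i.succ) j - v (k.succAbove 0) j)
    with hD_def
  set c : Fin (2*n+2) → ℝ := fun k => (-1:ℝ)^(k:ℕ) * D k with hc_def
  have hD : ∀ k, D k ≠ 0 := fun k =>
    det_diff_ne_zero (2*n) (fun i => v (k.succAbove i)) (hindep k)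
  have hc : ∀ k, c k ≠ 0 := fun k => mul_ne_zero (pow_ne_zero _ (by norm_num)) (hD k)
  -- the augmented matrix and the cofactor relations
  set W : Matrix (Fin (2*n+2)) (Fin (2*n+1)) ℝ := Matrix.of fun i => Fin.snoc (v i) 1 with hW
  have hsub : ∀ k : Fin (2*n+2), Matrix.det (W.submatrix k.succAbove id) = D k := by
    intro k
    have h1 : W.submatrix k.succAbove id =
        Matrix.of fun i : Fin (2*n+1) => Fin.snoc (v (k.succAbove i)) (1:ℝ) := by
      ext i j; simp [hW, Matrix.submatrix_apply]
    rw [h1, detSnoc]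
    have h2 : (-1:ℝ)^(2*n) = 1 := by rw [pow_mul]; norm_num
    rw [h2, one_mul]
  have hcofactor : ∀ j : Fin (2*n+1), ∑ k, c k * W k j = 0 := by
    intro j
    have h := cofactor_sum (2*n) W j
    rw [← h]
    apply Finset.sum_congr rfl
    intro k _
    rw [hsub k]
  have hcsum : ∑ k, c k = 0 := by
    have h := hcofactor (Fin.last (2*n))
    have h2 : ∀ k, W k (Fin.last (2*n)) = 1 := by intro k; simp [hW]
    simp only [h2, mul_one] at h
    exact h
  have hccomb : ∑ k, c k • v k = 0 := by
    funext j
    have h := hcofactor (Fin.castSucc j)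
    have h2 : ∀ k, W k (Fin.castSucc j) = v k j := by intro k; simp [hW]
    simp only [h2] at h
    simpa [Finset.sum_apply] using h
  -- interior characterization per face
  have hint_iff : ∀ k : Fin (2*n+2), ((0 : Fin (2*n) → ℝ) ∈ interior (convexHull ℝ
      (Set.range fun i : Fin (2*n+1) => v (k.succAbove i)))) ↔
      ∃ w : Fin (2*n+1) → ℝ, (∀ i, 0 < w i) ∧ ∑ i, w i = 1 ∧
        ∑ i, w i • v (k.succAbove i) = 0 :=
    fun k => interior_iff (2*n) _ (hindep k)
  -- kernel of the incidence relations is spanned by c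
  have T0 : ∀ (e : Fin (2*n+2) → ℝ) (k : Fin (2*n+2)), ∑ j, e j = 0 →
      ∑ j, e j • v j = 0 → e k = 0 → e = 0 := by
    intro e k hsum hcomb hek
    have h1 : ∑ i : Fin (2*n+1), e (k.succAbove i) = 0 := by
      have h := Fin.sum_univ_succAbove e k
      rw [hsum, hek] at h
      simpa using h.symm
    have h2 : ∑ i : Fin (2*n+1), e (k.succAbove i) • v (k.succAbove i) = 0 := by
      have h := Fin.sum_univ_succAbove (fun j => e j • v j) k
      simp only [hek, zero_smul] at h
      rw [hcomb] at h
      simpa using h.symm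
    have hz := affineIndependent_iff.mp (hindep k) Finset.univ _ h1 h2
    funext j
    by_cases hj : j = k
    · rw [hj]; exact hek
    · obtain ⟨i, hi⟩ := Fin.exists_succAbove_eq hj
      rw [← hi]
      exact hz i (Finset.mem_univ i)
  by_cases hall : ∀ k : Fin (2*n+2), simplexChar n (fun i => v (k.succAbove i)) = 0
  · apply Finset.sum_eq_zero
    intro k _
    rw [hall k, mul_zero]
  push_neg at hall
  obtain ⟨k0, hk0⟩ := hall
  have hint_of_ne : ∀ k : Fin (2*n+2), simplexChar n (fun i => v (k.succAbove i)) ≠ 0 →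
      (0 : Fin (2*n) → ℝ) ∈ interior (convexHull ℝ
        (Set.range fun i : Fin (2*n+1) => v (k.succAbove i))) := by
    intro k hk
    by_contra hmem
    exact hk (by simp only [simplexChar]; exact if_neg hmem)
  obtain ⟨w0, hw0pos, hw0sum, hw0comb⟩ := (hint_iff k0).mp (hint_of_ne k0 hk0)
  set μ0 : Fin (2*n+2) → ℝ := k0.insertNth 0 w0 with hμ0
  have hμ0k0 : μ0 k0 = 0 := by simp [hμ0]
  have hμ0s : ∀ i, μ0 (k0.succAbove i) = w0 i := by
    intro i; simp [hμ0]
  have hμsum : ∑ i, μ0 i = 1 := by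
    rw [Fin.sum_univ_succAbove μ0 k0, hμ0k0]
    simp only [hμ0s]
    rw [hw0sum]; ring
  have hμcomb : ∑ i, μ0 i • v i = 0 := by
    rw [Fin.sum_univ_succAbove (fun j => μ0 j • v j) k0, hμ0k0, zero_smul, zero_add]
    simp only [hμ0s]
    exact hw0comb
  set Q : Fin (2*n+2) → Prop := fun k =>
    ∃ t, μ0 k + t * c k = 0 ∧ ∀ i, i ≠ k → 0 < μ0 i + t * c i with hQ_def
  -- auxiliary sums
  have hsum_t : ∀ t : ℝ, ∑ j, (μ0 j + t * c j) = 1 := by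
    intro t
    rw [Finset.sum_add_distrib, hμsum, ← Finset.mul_sum, hcsum]; ring
  have hcomb_t : ∀ t : ℝ, ∑ j, (μ0 j + t * c j) • v j = 0 := by
    intro t
    simp only [add_smul]
    rw [Finset.sum_add_distrib, hμcomb]
    have h3 : ∑ j, (t * c j) • v j = t • ∑ j, c j • v j := by
      rw [Finset.smul_sum]
      congr 1
      funext j
      rw [smul_smul]
    rw [h3, hccomb, smul_zero]; simp
  have hqual : ∀ k : Fin (2*n+2), ((0 : Fin (2*n) → ℝ) ∈ interior (convexHull ℝ
      (Set.range fun i : Fin (2*n+1) => v (k.succAbove i)))) ↔ Q k := by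
    intro k
    rw [hint_iff k]
    constructor
    · rintro ⟨w, hpos, hsum, hcomb⟩
      set ν : Fin (2*n+2) → ℝ := k.insertNth 0 w with hν
      have hνk : ν k = 0 := by simp [hν]
      have hνs : ∀ i, ν (k.succAbove i) = w i := by
        intro i; simp [hν]
      have hνsum : ∑ i, ν i = 1 := by
        rw [Fin.sum_univ_succAbove ν k, hνk]
        simp only [hνs]
        rw [hsum]; ring
      have hνcomb : ∑ i, ν i • v i = 0 := by
        rw [Fin.sum_univ_succAbove (fun j => ν j • v j) k, hνk, zero_smul, zero_add]
        simp only [hνs]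
        exact hcomb
      set t : ℝ := (ν k0 - μ0 k0) / c k0 with ht
      have he : (fun j => ν j - (μ0 j + t * c j)) = 0 := by
        apply T0 _ k0
        · rw [Finset.sum_sub_distrib, hνsum, hsum_t t]; ring
        · simp only [sub_smul]
          rw [Finset.sum_sub_distrib, hνcomb, hcomb_t t]
          simp
        · rw [ht, div_mul_cancel₀ _ (hc k0)]; ring
      have hline : ∀ j, ν j = μ0 j + t * c j := by
        intro j
        have h := congrFun he j
        simp only [Pi.zero_apply] at h
        linarith
      refine ⟨t, ?_, ?_⟩
      · rw [← hline k]; exact hνk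
      · intro i hik
        rw [← hline i]
        obtain ⟨i', hi'⟩ := Fin.exists_succAbove_eq hik
        rw [← hi', hνs i']
        exact hpos i'
    · rintro ⟨t, htk, htp⟩
      refine ⟨fun i => μ0 (k.succAbove i) + t * c (k.succAbove i), ?_, ?_, ?_⟩
      · intro i; exact htp _ (Fin.succAbove_ne k i)
      · have h := Fin.sum_univ_succAbove (fun j => μ0 j + t * c j) k
        rw [hsum_t t, htk] at h
        simpa using h.symm
      · have h := Fin.sum_univ_succAbove (fun j => (μ0 j + t * c j) • v j) k
        rw [hcomb_t t] at h
        simp only [htk, zero_smul] at h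
        simpa using h.symm
  -- value of contributing terms
  have hval : ∀ k : Fin (2*n+2), Q k → ((-1:ℤ)^(k:ℕ)) * simplexChar n (fun i => v (k.succAbove i)) =
      (if 0 < c k then 1 else -1) := by
    intro k hQk
    have hint := (hqual k).mpr hQk
    have hsc : simplexChar n (fun i => v (k.succAbove i)) =
        if 0 < D k then 1 else -1 := by
      simp only [simplexChar]
      rw [if_pos hint]
    rw [hsc]
    rcases Nat.even_or_odd (k:ℕ) with he | ho
    · have h1 : ((-1:ℤ))^(k:ℕ) = 1 := he.neg_one_pow
      have h2 : c k = D k := by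
        simp only [hc_def]
        rw [he.neg_one_pow, one_mul]
      rw [h1, h2, one_mul]
    · have h1 : ((-1:ℤ))^(k:ℕ) = -1 := ho.neg_one_pow
      have h2 : c k = -D k := by
        simp only [hc_def]
        rw [ho.neg_one_pow]; ring
      rw [h1, h2]
      rcases lt_trichotomy (D k) 0 with h | h | h
      · rw [if_neg (by linarith), if_pos (by linarith)]; ring
      · exact absurd h (hD k)
      · rw [if_pos h, if_neg (by linarith)]; ring
  have hzero : ∀ k : Fin (2*n+2), ¬ Q k → simplexChar n (fun i => v (k.succAbove i)) = 0 := by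
    intro k hk
    simp only [simplexChar]
    exact if_neg (fun hmem => hk ((hqual k).mp hmem))
  -- flipping the sign of c
  have hQflip : ∀ k : Fin (2*n+2), Q k → ∃ t, μ0 k + t * (-c) k = 0 ∧ ∀ i, i ≠ k → 0 < μ0 i + t * (-c) i := by
    rintro k ⟨t, h1, h2⟩
    refine ⟨-t, ?_, ?_⟩
    · simp only [Pi.neg_apply]
      rw [show μ0 k + -t * -c k = μ0 k + t * c k by ring]
      exact h1
    · intro i hi
      simp only [Pi.neg_apply]
      rw [show μ0 i + -t * -c i = μ0 i + t * c i by ring]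
      exact h2 i hi
  have hQflip' : ∀ k : Fin (2*n+2), (∃ t, μ0 k + t * (-c) k = 0 ∧ ∀ i, i ≠ k → 0 < μ0 i + t * (-c) i) → Q k := by
    rintro k ⟨t, h1, h2⟩
    refine ⟨-t, ?_, ?_⟩
    · rw [show μ0 k + -t * c k = μ0 k + t * (-c) k by simp only [Pi.neg_apply]; ring]
      exact h1
    · intro i hi
      rw [show μ0 i + -t * c i = μ0 i + t * (-c) i by simp only [Pi.neg_apply]; ring]
      exact h2 i hi
  have hnegcsum : ∑ i, (-c) i = 0 := by simp [hcsum]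
  have hnegccomb : ∑ i, (-c) i • v i = 0 := by
    simp only [Pi.neg_apply, neg_smul]
    rw [Finset.sum_neg_distrib, hccomb, neg_zero]
  have hQk0 : Q k0 := (hqual k0).mp (hint_of_ne k0 hk0)
  -- produce the positive and the negative qualified indices
  obtain ⟨kp, hckp, hQkp, km, hckm, hQkm⟩ :
      ∃ kp, 0 < c kp ∧ Q kp ∧ ∃ km, c km < 0 ∧ Q km := by
    rcases lt_or_gt_of_ne (hc k0) with h | h
    · -- c k0 < 0 : find positive partner via -c
      obtain ⟨k', hk'neg, hk'q⟩ := partner n v havoid μ0 (-c) hμsum hμcomb hnegcsum hnegccomb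
        k0 (by simpa using h) (hQflip k0 hQk0)
      refine ⟨k', ?_, hQflip' k' hk'q, k0, h, hQk0⟩
      simpa using hk'neg
    · obtain ⟨k', hk'neg, hk'q⟩ := partner n v havoid μ0 c hμsum hμcomb hcsum hccomb
        k0 h hQk0
      exact ⟨k0, h, hQk0, k', hk'neg, hk'q⟩
  have hpm : kp ≠ km := by
    intro h
    rw [h] at hckp
    linarith
  -- uniqueness of the qualified indices
  have huniq : ∀ k : Fin (2*n+2), Q k → k = kp ∨ k = km := by
    intro k hQk
    rcases lt_or_gt_of_ne (hc k) with h | h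
    · right
      exact qual_uniq μ0 (-c) (hQflip k hQk) (hQflip km hQkm)
        (by simpa using h) (by simpa using hckm)
    · left
      exact qual_uniq μ0 c hQk hQkp h hckp
  -- final computation
  have hterm : ∀ k : Fin (2*n+2), ((-1:ℤ)^(k:ℕ)) * simplexChar n (fun i => v (k.succAbove i)) =
      (if k = kp then 1 else if k = km then -1 else 0) := by
    intro k
    by_cases h1 : k = kp
    · subst h1
      rw [if_pos rfl, hval k hQkp, if_pos hckp]
    · by_cases h2 : k = km
      · subst h2
        rw [if_neg h1, if_pos rfl, hval k hQkm, if_neg (not_lt.mpr (le_of_lt hckm))]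
      · rw [if_neg h1, if_neg h2]
        by_cases hQk : Q k
        · rcases huniq k hQk with h | h
          · exact absurd h h1
          · exact absurd h h2
        · rw [hzero k hQk, mul_zero]
  rw [Finset.sum_congr rfl (fun k _ => hterm k)]
  have hsplit : ∀ k : Fin (2*n+2), (if k = kp then (1:ℤ) else if k = km then -1 else 0) =
      (if k = kp then (1:ℤ) else 0) + (if k = km then -1 else 0) := by
    intro k
    by_cases h1 : k = kp
    · subst h1; simp [hpm]
    · by_cases h2 : k = km
      · subst h2; simp [h1]
      · simp [h1, h2]
  rw [Finset.sum_congr rfl (fun k _ => hsplit k), Finset.sum_add_distrib]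
  rw [Finset.sum_ite_eq' Finset.univ kp (fun _ => (1:ℤ)),
    Finset.sum_ite_eq' Finset.univ km (fun _ => (-1:ℤ))]
  simp
end
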